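/- Let r ≥ 3, k ≥ 1, ℓ_1 ≥ ℓ_2 ≥ ⋯ ≥ ℓ_k ≥ 2 and s ≥ k + r − 1 be integers. Then there exist a constant c and an integer N such that ex_r(n, K_s^{(r)}, S^r_{ℓ_1} ∪ ⋯ ∪ S^r_{ℓ_k}) ≤ c·n^{r−2} for all n ≥ N. Moreover, if k + r − 1 ≤ s ≤ Σ_{i=1}^{k}(ℓ_i + 1) + r − 3, then there also exists a constant c' > 0 such that ex_r(n, K_s^{(r)}, S^r_{ℓ_1} ∪ ⋯ ∪ S^r_{ℓ_k}) ≥ c'·n^{r−2} for all n ≥ N. -/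

import Mathlib

open Finset

/-- A hypergraph (with vertices drawn from `ℕ`) given by its finite set of hyperedges. -/
abbrev HG : Type := Finset (Finset ℕ)

/-- The support (set of non-isolated vertices) of a hypergraph. -/
def hsupp (G : HG) : Finset ℕ := G.sup id

/-- `G` is `r`-uniform: every hyperedge has exactly `r` vertices. -/
def Uniform (r : ℕ) (G : HG) : Prop := ∀ e ∈ G, e.card = r

/-- The image of a hypergraph under a relabelling of the vertices. -/
def emap (f : ℕ → ℕ) (G : HG) : HG := G.image (Finset.image f)

/-- `K` is an isomorphic copy of `H` (as hypergraphs; isolated vertices are irrelevant). -/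
def IsCopy (H K : HG) : Prop :=
  ∃ f : ℕ → ℕ, Set.InjOn f ↑(hsupp H) ∧ emap f H = K

/-- `G` contains a subhypergraph isomorphic to `H`. -/
def Contains (G H : HG) : Prop := ∃ K, K ⊆ G ∧ IsCopy H K

/-- `N(H, G)`: the number of subhypergraphs of `G` isomorphic to `H`. -/
noncomputable def copyCount (H G : HG) : ℕ :=
  Set.ncard {K : HG | K ⊆ G ∧ IsCopy H K}

/-- The generalized Turán number `ex_r(n, H, F)`: the maximum number of copies of `H`
in an `F`-free `r`-uniform hypergraph on `n` vertices. -/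
noncomputable def exCount (r n : ℕ) (H F : HG) : ℕ :=
  sSup { m | ∃ G : HG, Uniform r G ∧ hsupp G ⊆ Finset.range n ∧
    ¬ Contains G F ∧ m = copyCount H G }

/-- The Turán number `ex_r(n, F)`: the maximum number of hyperedges in an `F`-free
`r`-uniform hypergraph on `n` vertices. -/
noncomputable def exTuran (r n : ℕ) (F : HG) : ℕ :=
  sSup { m | ∃ G : HG, Uniform r G ∧ hsupp G ⊆ Finset.range n ∧
    ¬ Contains G F ∧ m = G.card }

/-- The complete `r`-graph `K_s^{(r)}` on `s` vertices. -/
def completeHG (r s : ℕ) : HG := Finset.powersetCard r (Finset.range s)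

/-- The path `P_l` with `l` edges, as a 2-uniform hypergraph. -/
def pathG (l : ℕ) : HG := (Finset.range l).image (fun i => ({i, i+1} : Finset ℕ))

/-- The cycle `C_l` with `l` edges, as a 2-uniform hypergraph. -/
def cycleG (l : ℕ) : HG := (Finset.range l).image (fun i => ({i, (i+1) % l} : Finset ℕ))

/-- The star `S_l = K_{1,l}` with `l` edges, as a 2-uniform hypergraph. -/
def starG (l : ℕ) : HG := (Finset.range l).image (fun i => ({0, i+1} : Finset ℕ))

/-- The `r`-expansion `F^r` of a graph `F`: insert `r - 2` new distinct vertices into each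
edge of `F`, the new vertices being distinct across edges and disjoint from `V(F)`. -/
def expansion (r : ℕ) (F : HG) : HG :=
  F.image (fun e => e.image (fun v => Nat.pair 0 v) ∪
    (Finset.range (r-2)).image (fun j => Nat.pair 1 (Nat.pair (Encodable.encode e) j)))

/-- The vertex-disjoint union of the hypergraphs `H 0, …, H (k-1)`. -/
def hIUnion (k : ℕ) (H : ℕ → HG) : HG :=
  (Finset.range k).biUnion (fun i => emap (fun v => Nat.pair i v) (H i))

/-- The vertex-disjoint union of two hypergraphs. -/
def hUnion (G H : HG) : HG := emap (fun v => 2*v) G ∪ emap (fun v => 2*v+1) H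

/-- The strong chromatic number of a hypergraph (for a 2-uniform hypergraph this is
the usual chromatic number of the graph). -/
noncomputable def chromNum (G : HG) : ℕ :=
  sInf { k | ∃ c : ℕ → Fin k, ∀ e ∈ G, Set.InjOn c ↑e }

/-- The complete balanced `l`-partite `r`-graph `T_r(n, l)` on `n` vertices. -/
def turanHG (r n l : ℕ) : HG :=
  (Finset.powersetCard r (Finset.range n)).filter
    (fun e => ∀ i ∈ e, ∀ j ∈ e, i % l = j % l → i = j)

/-- `S_{n,t}^r(n-t, l)`: take a set `U` of `t` vertices together with a disjoint copy of
`T_r(n-t, l)`, and add as hyperedges all `r`-sets meeting `U`. -/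
def splitTuranHG (r n t l : ℕ) : HG :=
  (Finset.powersetCard r (Finset.range n)).filter
    (fun e => (∃ v ∈ e, v < t) ∨ ∀ i ∈ e, ∀ j ∈ e, (i - t) % l = (j - t) % l → i = j)

/-- `S_{n,t}^r`: the `n`-vertex `r`-graph of all `r`-sets meeting a fixed set of `t` vertices. -/
def starHG (r n t : ℕ) : HG :=
  (Finset.powersetCard r (Finset.range n)).filter (fun e => ∃ v ∈ e, v < t)

/-- `F` is a member of the family `𝒦_t^r`. -/
def memFamilyK (r t : ℕ) (F : HG) : Prop :=
  Uniform r F ∧ F.card ≤ Nat.choose t 2 ∧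
    ∃ S : Finset ℕ, S.card = t ∧ ∀ u ∈ S, ∀ v ∈ S, u ≠ v → ∃ e ∈ F, u ∈ e ∧ v ∈ e

/-- The maximum number of copies of `H` in an `n`-vertex `r`-graph containing no member
of the family described by the predicate `P` as a subhypergraph. -/
noncomputable def exCountFam (r n : ℕ) (H : HG) (P : HG → Prop) : ℕ :=
  sSup { m | ∃ G : HG, Uniform r G ∧ hsupp G ⊆ Finset.range n ∧
    (∀ F : HG, P F → ¬ Contains G F) ∧ m = copyCount H G }

/-- `G` contains a Berge copy of `F`. -/
def ContainsBerge (G F : HG) : Prop :=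
  ∃ f : ℕ → ℕ, Set.InjOn f ↑(hsupp F) ∧
    ∃ φ : {e : Finset ℕ // e ∈ F} → {e : Finset ℕ // e ∈ G},
      Function.Injective φ ∧ ∀ e : {e : Finset ℕ // e ∈ F}, e.1.image f ⊆ (φ e).1

/-- `ex_s(n, Berge-F)`: the maximum number of hyperedges in an `n`-vertex `s`-graph
containing no Berge copy of `F`. -/
noncomputable def exBerge (s n : ℕ) (F : HG) : ℕ :=
  sSup { m | ∃ G : HG, Uniform s G ∧ hsupp G ⊆ Finset.range n ∧
    ¬ ContainsBerge G F ∧ m = G.card }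


section Stmt7Aux
open scoped Classical
open Finset

lemma mem_hsupp {G : HG} {a : ℕ} : a ∈ hsupp G ↔ ∃ e ∈ G, a ∈ e := by
  simp [hsupp, Finset.mem_sup, id]

lemma edge_subset_hsupp {G : HG} {e : Finset ℕ} (he : e ∈ G) : e ⊆ hsupp G :=
  fun a ha => mem_hsupp.2 ⟨e, he, ha⟩

lemma edge_mem_pc {r n : ℕ} {G : HG} (hu : Uniform r G) (hs : hsupp G ⊆ Finset.range n)
    {e : Finset ℕ} (he : e ∈ G) : e ∈ (Finset.range n).powersetCard r := by
  rw [Finset.mem_powersetCard]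
  exact ⟨(edge_subset_hsupp he).trans hs, hu e he⟩

lemma card_pc_le {n t : ℕ} : ((Finset.range n).powersetCard t).card ≤ n ^ t := by
  rw [Finset.card_powersetCard, Finset.card_range]; exact Nat.choose_le_pow _ _

lemma powersetCard_image_injOn {f : ℕ → ℕ} {A : Finset ℕ} (hf : Set.InjOn f ↑A) (t : ℕ) :
    (A.powersetCard t).image (Finset.image f) = (A.image f).powersetCard t := by
  ext S
  simp only [Finset.mem_image, Finset.mem_powersetCard]
  constructor
  · rintro ⟨u, ⟨hu, hcard⟩, rfl⟩
    refine ⟨Finset.image_subset_image hu, ?_⟩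
    rw [Finset.card_image_of_injOn (hf.mono (by exact_mod_cast hu))]
    exact hcard
  · rintro ⟨hS, hcard⟩
    refine ⟨A.filter (fun a => f a ∈ S), ⟨Finset.filter_subset _ _, ?_⟩,
      ?_⟩
    · have himg : (A.filter (fun a => f a ∈ S)).image f = S := by
        apply Finset.Subset.antisymm
        · intro x hx
          rcases Finset.mem_image.1 hx with ⟨a, ha, rfl⟩
          exact (Finset.mem_filter.1 ha).2
        · intro x hx
          rcases Finset.mem_image.1 (hS hx) with ⟨a, ha, rfl⟩
          exact Finset.mem_image.2 ⟨a, Finset.mem_filter.2 ⟨ha, hx⟩, rfl⟩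
      calc (A.filter (fun a => f a ∈ S)).card
          = ((A.filter (fun a => f a ∈ S)).image f).card :=
            (Finset.card_image_of_injOn (hf.mono (by
              intro x hx; exact (Finset.mem_filter.1 (by exact_mod_cast hx)).1))).symm
        _ = t := by rw [himg, hcard]
    · apply Finset.Subset.antisymm
      · intro x hx
        rcases Finset.mem_image.1 hx with ⟨a, ha, rfl⟩
        exact (Finset.mem_filter.1 ha).2
      · intro x hx
        rcases Finset.mem_image.1 (hS hx) with ⟨a, ha, rfl⟩
        exact Finset.mem_image.2 ⟨a, Finset.mem_filter.2 ⟨ha, hx⟩, rfl⟩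

lemma exists_rsubset_mem {T : Finset ℕ} {t r : ℕ} (ht : t ∈ T) (h1 : 1 ≤ r) (hr : r ≤ T.card) :
    ∃ u, u ∈ T.powersetCard r ∧ t ∈ u := by
  have hcard : r - 1 ≤ (T.erase t).card := by
    rw [Finset.card_erase_of_mem ht]; omega
  rcases Finset.exists_subset_card_eq hcard with ⟨u, hu, hcu⟩
  refine ⟨insert t u, ?_, Finset.mem_insert_self _ _⟩
  rw [Finset.mem_powersetCard]
  constructor
  · exact Finset.insert_subset ht (hu.trans (Finset.erase_subset _ _))
  · rw [Finset.card_insert_of_notMem (fun hc => (Finset.mem_erase.1 (hu hc)).1 rfl), hcu]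
    omega

lemma sup_powersetCard {T : Finset ℕ} {r : ℕ} (h1 : 1 ≤ r) (hr : r ≤ T.card) :
    (T.powersetCard r).sup id = T := by
  apply Finset.Subset.antisymm
  · intro t ht
    rcases Finset.mem_sup.1 ht with ⟨u, hu, htu⟩
    exact (Finset.mem_powersetCard.1 hu).1 htu
  · intro t ht
    rcases exists_rsubset_mem ht h1 hr with ⟨u, hu, htu⟩
    exact Finset.mem_sup.2 ⟨u, hu, htu⟩

lemma hsupp_completeHG {r s : ℕ} (h1 : 1 ≤ r) (hrs : r ≤ s) :
    hsupp (completeHG r s) = Finset.range s := by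
  have := sup_powersetCard (T := Finset.range s) (r := r) h1 (by rwa [Finset.card_range])
  simpa [hsupp, completeHG] using this

noncomputable def countSet (G : HG) (r n m : ℕ) (Z S₀ : Finset ℕ) : Finset (Finset ℕ) :=
  ((Finset.range n).powersetCard m).filter
    (fun R => R ∩ Z = ∅ ∧ (∀ e ∈ R.powersetCard r, e ∈ G) ∧
      ∀ Q ∈ R.powersetCard (r-1), ∀ x ∈ S₀, insert x Q ∈ G)

lemma mem_countSet {G : HG} {r n m : ℕ} {Z S₀ : Finset ℕ} {R : Finset ℕ} :
    R ∈ countSet G r n m Z S₀ ↔ (R ⊆ Finset.range n ∧ R.card = m) ∧ R ∩ Z = ∅ ∧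
      (∀ e ∈ R.powersetCard r, e ∈ G) ∧
      ∀ Q ∈ R.powersetCard (r-1), ∀ x ∈ S₀, insert x Q ∈ G := by
  simp [countSet, Finset.mem_filter, Finset.mem_powersetCard, and_assoc]

lemma copyCount_eq_cliques {G : HG} {r n s : ℕ} (h1 : 1 ≤ r) (hrs : r ≤ s)
    (hu : Uniform r G) (hs : hsupp G ⊆ Finset.range n) :
    copyCount (completeHG r s) G = (countSet G r n s ∅ ∅).card := by
  classical
  have hset : {K : HG | K ⊆ G ∧ IsCopy (completeHG r s) K}
      = ↑((countSet G r n s ∅ ∅).image (fun T => T.powersetCard r)) := by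
    ext K
    simp only [Set.mem_setOf_eq, Finset.coe_image, Set.mem_image, Finset.mem_coe]
    constructor
    · rintro ⟨hKG, f, hinj, hemap⟩
      rw [hsupp_completeHG h1 hrs] at hinj
      set T : Finset ℕ := (Finset.range s).image f with hT
      have hK : K = T.powersetCard r := by
        rw [← hemap]
        show emap f (completeHG r s) = _
        rw [emap, completeHG, powersetCard_image_injOn hinj]
      have hTcard : T.card = s := by
        rw [hT, Finset.card_image_of_injOn (by simpa using hinj), Finset.card_range]
      have hrT : r ≤ T.card := by omega
      refine ⟨T, ?_, hK.symm⟩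
      rw [mem_countSet]
      refine ⟨⟨?_, hTcard⟩, by simp, ?_, by simp⟩
      · intro t ht
        rcases exists_rsubset_mem ht h1 hrT with ⟨u, hu', htu⟩
        have : u ∈ G := hKG (by rw [hK]; exact hu')
        exact hs (edge_subset_hsupp this htu)
      · intro e he
        exact hKG (by rw [hK]; exact he)
    · rintro ⟨T, hT, rfl⟩
      rw [mem_countSet] at hT
      obtain ⟨⟨hTn, hTcard⟩, -, hcl, -⟩ := hT
      refine ⟨fun e he => hcl e he, ?_⟩
      have hTc : T.card = s := hTcard
      set g : Fin s ≃o {x // x ∈ T} := T.orderIsoOfFin hTc with hg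
      set f : ℕ → ℕ := fun m => if h : m < s then (g ⟨m, h⟩ : ℕ) else m with hf
      have hinj : Set.InjOn f ↑(hsupp (completeHG r s)) := by
        rw [hsupp_completeHG h1 hrs]
        intro a ha b hb hab
        simp only [Finset.coe_range, Set.mem_Iio] at ha hb
        rw [hf] at hab
        simp only [dif_pos ha, dif_pos hb] at hab
        have := g.injective (Subtype.coe_injective hab)
        exact congrArg Fin.val this
      have himg : (Finset.range s).image f = T := by
        apply Finset.eq_of_subset_of_card_le
        · intro x hx
          rcases Finset.mem_image.1 hx with ⟨a, ha, rfl⟩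
          have ha' : a < s := Finset.mem_range.1 ha
          rw [hf]; simp only [dif_pos ha']
          exact (g ⟨a, ha'⟩).2
        · rw [Finset.card_image_of_injOn (by
            simpa [hsupp_completeHG h1 hrs] using hinj), Finset.card_range, hTc]
      refine ⟨f, hinj, ?_⟩
      show emap f (completeHG r s) = _
      rw [emap, completeHG, powersetCard_image_injOn (by simpa [hsupp_completeHG h1 hrs] using hinj), himg]
  rw [copyCount, hset, Set.ncard_coe_finset]
  apply Finset.card_image_of_injOn
  intro T hT T' hT' heq
  rw [Finset.mem_coe, mem_countSet] at hT hT'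
  have h1T : T = (T.powersetCard r).sup id :=
    (sup_powersetCard h1 (by omega)).symm
  have h1T' : T' = (T'.powersetCard r).sup id :=
    (sup_powersetCard h1 (by omega)).symm
  simp only [] at heq
  rw [h1T, h1T', heq]

noncomputable def encS (j : ℕ) : ℕ := Encodable.encode ({0, j+1} : Finset ℕ)

noncomputable def Eraw (r j : ℕ) : Finset ℕ :=
  ({0, j+1} : Finset ℕ).image (Nat.pair 0) ∪
    (Finset.range (r-2)).image (fun m => Nat.pair 1 (Nat.pair (encS j) m))

noncomputable def EF (r i j : ℕ) : Finset ℕ := (Eraw r j).image (Nat.pair i)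

lemma pair_left_inj (a : ℕ) : Function.Injective (Nat.pair a) := by
  intro x y h
  have := congrArg Nat.unpair h
  simpa [Nat.unpair_pair] using this

lemma encS_inj {j j' : ℕ} (h : encS j = encS j') : j = j' := by
  have h2 : ({0, j+1} : Finset ℕ) = {0, j'+1} := Encodable.encode_injective h
  have : j+1 ∈ ({0, j'+1} : Finset ℕ) := h2 ▸ (by simp)
  simp only [Finset.mem_insert, Finset.mem_singleton] at this
  omega

lemma forest_eq (r k : ℕ) (l : ℕ → ℕ) :
    hIUnion k (fun i => expansion r (starG (l i)))
      = (Finset.range k).biUnion (fun i => (Finset.range (l i)).image (EF r i)) := by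
  unfold hIUnion expansion starG emap
  apply Finset.biUnion_congr rfl
  intro i _
  rw [Finset.image_image, Finset.image_image]
  apply Finset.image_congr
  intro j _
  simp only [Function.comp_apply, EF, Eraw, encS]

lemma mem_Eraw {r j x : ℕ} : x ∈ Eraw r j ↔
    x = Nat.pair 0 0 ∨ x = Nat.pair 0 (j+1) ∨
      ∃ m < r - 2, x = Nat.pair 1 (Nat.pair (encS j) m) := by
  simp only [Eraw, Finset.mem_union, Finset.mem_image, Finset.mem_insert,
    Finset.mem_singleton, Finset.mem_range]
  constructor
  · rintro (⟨a, (rfl | rfl), rfl⟩ | ⟨m, hm, rfl⟩)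
    · exact Or.inl rfl
    · exact Or.inr (Or.inl rfl)
    · exact Or.inr (Or.inr ⟨m, hm, rfl⟩)
  · rintro (rfl | rfl | ⟨m, hm, rfl⟩)
    · exact Or.inl ⟨0, Or.inl rfl, rfl⟩
    · exact Or.inl ⟨j+1, Or.inr rfl, rfl⟩
    · exact Or.inr ⟨m, hm, rfl⟩

lemma card_Eraw {r j : ℕ} (hr : 2 ≤ r) : (Eraw r j).card = r := by
  rw [Eraw, Finset.card_union_of_disjoint, Finset.card_image_of_injective _ (pair_left_inj 0),
    Finset.card_image_of_injective _ (fun x y h => pair_left_inj 1 h |> fun h2 => (pair_left_inj _ h2))]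
  · simp only [Finset.card_range]
    rw [Finset.card_insert_of_notMem (by simp), Finset.card_singleton]
    omega
  · rw [Finset.disjoint_left]
    rintro x hx hx'
    rcases Finset.mem_image.1 hx with ⟨a, _, rfl⟩
    rcases Finset.mem_image.1 hx' with ⟨m, _, hm⟩
    have := (Nat.pair_eq_pair.1 hm).1
    omega

lemma card_EF {r i j : ℕ} (hr : 2 ≤ r) : (EF r i j).card = r := by
  rw [EF, Finset.card_image_of_injective _ (pair_left_inj i), card_Eraw hr]

lemma center_mem_EF {r i j : ℕ} : Nat.pair i (Nat.pair 0 0) ∈ EF r i j :=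
  Finset.mem_image.2 ⟨Nat.pair 0 0, mem_Eraw.2 (Or.inl rfl), rfl⟩

lemma Eraw_inter {r j j' : ℕ} (h : j ≠ j') :
    Eraw r j ∩ Eraw r j' = {Nat.pair 0 0} := by
  ext x
  simp only [Finset.mem_inter, Finset.mem_singleton, mem_Eraw]
  constructor
  · rintro ⟨(rfl | rfl | ⟨m, hm, rfl⟩), (h2 | h2 | ⟨m', hm', h2⟩)⟩
    · rfl
    · exact absurd (Nat.pair_eq_pair.1 h2).2 (by omega)
    · exact absurd (Nat.pair_eq_pair.1 h2).1 (by omega)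
    · exact absurd (Nat.pair_eq_pair.1 h2).2 (by omega)
    · exact absurd (Nat.pair_eq_pair.1 h2).2 (fun hh => h (by omega))
    · exact absurd (Nat.pair_eq_pair.1 h2).1 (by omega)
    · exact absurd (Nat.pair_eq_pair.1 h2).1 (by omega)
    · exact absurd (Nat.pair_eq_pair.1 h2).1 (by omega)
    · have := Nat.pair_eq_pair.1 (Nat.pair_eq_pair.1 h2).2
      exact absurd (encS_inj this.1) h
  · rintro rfl
    exact ⟨Or.inl rfl, Or.inl rfl⟩

lemma EF_inter_same {r i j j' : ℕ} (h : j ≠ j') :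
    EF r i j ∩ EF r i j' = {Nat.pair i (Nat.pair 0 0)} := by
  rw [EF, EF, ← Finset.image_inter _ _ (pair_left_inj i), Eraw_inter h,
    Finset.image_singleton]

lemma EF_inter_ne {r i i' j j' : ℕ} (h : i ≠ i') : EF r i j ∩ EF r i' j' = ∅ := by
  rw [Finset.eq_empty_iff_forall_notMem]
  intro x hx
  rcases Finset.mem_inter.1 hx with ⟨h1, h2⟩
  rcases Finset.mem_image.1 h1 with ⟨a, _, rfl⟩
  rcases Finset.mem_image.1 h2 with ⟨b, _, hb⟩
  exact h ((Nat.pair_eq_pair.1 hb).1).symm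

lemma EF_ne_same {r i j j' : ℕ} (hr : 3 ≤ r) (h : j ≠ j') : EF r i j ≠ EF r i j' := by
  intro hEq
  have h2 := EF_inter_same (r := r) (i := i) h
  rw [hEq, Finset.inter_self] at h2
  have := card_EF (r := r) (i := i) (j := j') (by omega)
  rw [h2, Finset.card_singleton] at this
  omega

lemma mem_hsupp_forest {r k : ℕ} {l : ℕ → ℕ} {v : ℕ} :
    v ∈ hsupp (hIUnion k (fun i => expansion r (starG (l i)))) ↔
      ∃ i < k, ∃ j < l i, v ∈ EF r i j := by
  rw [forest_eq, mem_hsupp]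
  constructor
  · rintro ⟨e, he, hv⟩
    rcases Finset.mem_biUnion.1 he with ⟨i, hi, he2⟩
    rcases Finset.mem_image.1 he2 with ⟨j, hj, rfl⟩
    exact ⟨i, Finset.mem_range.1 hi, j, Finset.mem_range.1 hj, hv⟩
  · rintro ⟨i, hi, j, hj, hv⟩
    exact ⟨EF r i j, Finset.mem_biUnion.2 ⟨i, Finset.mem_range.2 hi,
      Finset.mem_image.2 ⟨j, Finset.mem_range.2 hj, rfl⟩⟩, hv⟩

def SunAt (G : HG) (r x ℓ : ℕ) (pet : ℕ → Finset ℕ) : Prop :=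
  ∀ j < ℓ, pet j ∈ G ∧ x ∈ pet j ∧ (pet j).card = r ∧
    ∀ j' < ℓ, j ≠ j' → pet j ∩ pet j' = {x}

def Forest (G : HG) (r k : ℕ) (l : ℕ → ℕ) : Prop :=
  ∃ x : ℕ → ℕ, ∃ pet : ℕ → ℕ → Finset ℕ,
    (∀ i < k, SunAt G r (x i) (l i) (pet i)) ∧
    ∀ i < k, ∀ i' < k, i ≠ i' → ∀ j < l i, ∀ j' < l i', pet i j ∩ pet i' j' = ∅

lemma image_inter_injOn {f : ℕ → ℕ} {s : Set ℕ} (hf : Set.InjOn f s)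
    {A B : Finset ℕ} (hA : ↑A ⊆ s) (hB : ↑B ⊆ s) :
    (A.image f) ∩ (B.image f) = (A ∩ B).image f := by
  ext y
  simp only [Finset.mem_inter, Finset.mem_image]
  constructor
  · rintro ⟨⟨a, ha, rfl⟩, ⟨b, hb, hba⟩⟩
    have : b = a := hf (hB (by exact_mod_cast hb)) (hA (by exact_mod_cast ha)) hba
    subst this
    exact ⟨b, ⟨ha, hb⟩, rfl⟩
  · rintro ⟨a, ⟨h1, h2⟩, rfl⟩
    exact ⟨⟨a, h1, rfl⟩, ⟨a, h2, rfl⟩⟩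

lemma EF_mem_forest {r k : ℕ} {l : ℕ → ℕ} {i j : ℕ} (hi : i < k) (hj : j < l i) :
    EF r i j ∈ hIUnion k (fun i => expansion r (starG (l i))) := by
  rw [forest_eq]
  exact Finset.mem_biUnion.2 ⟨i, Finset.mem_range.2 hi,
    Finset.mem_image.2 ⟨j, Finset.mem_range.2 hj, rfl⟩⟩

lemma EF_subset_supp {r k : ℕ} {l : ℕ → ℕ} {i j : ℕ} (hi : i < k) (hj : j < l i) :
    ↑(EF r i j) ⊆ (↑(hsupp (hIUnion k (fun i => expansion r (starG (l i))))) : Set ℕ) := by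
  intro v hv
  exact_mod_cast mem_hsupp_forest.2 ⟨i, hi, j, hj, by exact_mod_cast hv⟩

theorem decompose {G : HG} {r k : ℕ} {l : ℕ → ℕ} (hr : 3 ≤ r)
    (h : Contains G (hIUnion k (fun i => expansion r (starG (l i))))) :
    Forest G r k l := by
  obtain ⟨K, hKG, f, hinj, hemap⟩ := h
  refine ⟨fun i => f (Nat.pair i (Nat.pair 0 0)), fun i j => (EF r i j).image f, ?_, ?_⟩
  · intro i hi j hj
    refine ⟨?_, ?_, ?_, ?_⟩
    · apply hKG
      rw [← hemap]
      exact Finset.mem_image.2 ⟨EF r i j, EF_mem_forest hi hj, rfl⟩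
    · exact Finset.mem_image.2 ⟨_, center_mem_EF, rfl⟩
    · rw [Finset.card_image_of_injOn (hinj.mono (EF_subset_supp hi hj)), card_EF (by omega)]
    · intro j' hj' hne
      rw [image_inter_injOn hinj (EF_subset_supp hi hj) (EF_subset_supp hi hj'),
        EF_inter_same hne, Finset.image_singleton]
  · intro i hi i' hi' hne j hj j' hj'
    rw [image_inter_injOn hinj (EF_subset_supp hi hj) (EF_subset_supp hi' hj'),
      EF_inter_ne hne, Finset.image_empty]

noncomputable def jdec (c : ℕ) : ℕ :=
  (((Encodable.decode c : Option (Finset ℕ)).getD ∅).sup id) - 1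

lemma jdec_encS (j : ℕ) : jdec (encS j) = j := by
  rw [jdec, encS, Encodable.encodek]
  have : (({0, j+1} : Finset ℕ).sup id) = j + 1 := by
    simp [Finset.sup_insert, Finset.sup_singleton]
  simp [Option.getD, this]

theorem build {G : HG} {r k : ℕ} {l : ℕ → ℕ} (hr : 3 ≤ r)
    (h : Forest G r k l) :
    Contains G (hIUnion k (fun i => expansion r (starG (l i)))) := by
  classical
  obtain ⟨x, pet, hsun, hcross⟩ := h
  set A : ℕ → ℕ → Finset ℕ := fun i j => (pet i j).erase (x i) with hA
  set L : ℕ → ℕ → List ℕ := fun i j => (A i j).sort (· ≤ ·) with hL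
  set g : ℕ → ℕ → ℕ → ℕ := fun i j t => (L i j).getD t 0 with hg
  set f : ℕ → ℕ := fun v =>
    if (v.unpair.2).unpair.1 = 0 then
      (if (v.unpair.2).unpair.2 = 0 then x v.unpair.1
       else g v.unpair.1 ((v.unpair.2).unpair.2 - 1) 0)
    else g v.unpair.1 (jdec (((v.unpair.2).unpair.2).unpair.1))
      ((((v.unpair.2).unpair.2).unpair.2) + 1) with hf
  have hev0 : ∀ i, f (Nat.pair i (Nat.pair 0 0)) = x i := by
    intro i; simp [hf, Nat.unpair_pair]
  have hev1 : ∀ i j, f (Nat.pair i (Nat.pair 0 (j+1))) = g i j 0 := by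
    intro i j; simp [hf, Nat.unpair_pair]
  have hev2 : ∀ i j m, f (Nat.pair i (Nat.pair 1 (Nat.pair (encS j) m))) = g i j (m+1) := by
    intro i j m; simp [hf, Nat.unpair_pair, jdec_encS]
  have hlen : ∀ i < k, ∀ j < l i, (L i j).length = r - 1 := by
    intro i hi j hj
    obtain ⟨-, hx, hc, -⟩ := hsun i hi j hj
    rw [hL]
    simp only [Finset.length_sort, hA, Finset.card_erase_of_mem hx, hc]
  have hgmem : ∀ i < k, ∀ j < l i, ∀ t < r - 1, g i j t ∈ A i j := by
    intro i hi j hj t ht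
    have hlt : t < (L i j).length := by rw [hlen i hi j hj]; exact ht
    rw [hg]
    simp only [List.getD_eq_getElem _ _ hlt]
    exact (Finset.mem_sort _).1 (List.getElem_mem hlt)
  have hginj : ∀ i < k, ∀ j < l i, ∀ t < r - 1, ∀ t' < r - 1,
      g i j t = g i j t' → t = t' := by
    intro i hi j hj t ht t' ht' hgg
    have hlt : t < (L i j).length := by rw [hlen i hi j hj]; exact ht
    have hlt' : t' < (L i j).length := by rw [hlen i hi j hj]; exact ht'
    rw [hg] at hgg
    simp only [List.getD_eq_getElem _ _ hlt, List.getD_eq_getElem _ _ hlt'] at hgg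
    exact ((Finset.sort_nodup _ _).getElem_inj_iff).1 hgg
  have himgA : ∀ i < k, ∀ j < l i,
      (Finset.range (r-1)).image (fun t => g i j t) = A i j := by
    intro i hi j hj
    apply Finset.eq_of_subset_of_card_le
    · intro y hy
      rcases Finset.mem_image.1 hy with ⟨t, ht, rfl⟩
      exact hgmem i hi j hj t (Finset.mem_range.1 ht)
    · obtain ⟨-, hx, hc, -⟩ := hsun i hi j hj
      rw [hA]
      simp only [Finset.card_erase_of_mem hx, hc]
      rw [Finset.card_image_of_injOn, Finset.card_range]
      intro t ht t' ht' htt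
      exact hginj i hi j hj t (by simpa using ht) t' (by simpa using ht') htt
  have hpet_eq : ∀ i < k, ∀ j < l i, insert (x i) (A i j) = pet i j := by
    intro i hi j hj
    obtain ⟨-, hx, -, -⟩ := hsun i hi j hj
    rw [hA, Finset.insert_erase hx]
  have himgE : ∀ i < k, ∀ j < l i, (EF r i j).image f = pet i j := by
    intro i hi j hj
    rw [EF, Finset.image_image]
    ext y
    simp only [Finset.mem_image, Function.comp_apply]
    constructor
    · rintro ⟨w, hw, rfl⟩
      rcases mem_Eraw.1 hw with rfl | rfl | ⟨m, hm, rfl⟩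
      · rw [hev0]
        exact (hpet_eq i hi j hj) ▸ Finset.mem_insert_self _ _
      · rw [hev1]
        exact (hpet_eq i hi j hj) ▸ Finset.mem_insert_of_mem
          (hgmem i hi j hj 0 (by omega))
      · rw [hev2]
        exact (hpet_eq i hi j hj) ▸ Finset.mem_insert_of_mem
          (hgmem i hi j hj (m+1) (by omega))
    · intro hy
      rw [← hpet_eq i hi j hj] at hy
      rcases Finset.mem_insert.1 hy with rfl | hy2
      · exact ⟨Nat.pair 0 0, mem_Eraw.2 (Or.inl rfl), hev0 i⟩
      · rw [← himgA i hi j hj] at hy2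
        rcases Finset.mem_image.1 hy2 with ⟨t, ht, rfl⟩
        have ht' : t < r - 1 := Finset.mem_range.1 ht
        rcases Nat.eq_zero_or_pos t with rfl | hpos
        · exact ⟨Nat.pair 0 (j+1), mem_Eraw.2 (Or.inr (Or.inl rfl)), hev1 i j⟩
        · refine ⟨Nat.pair 1 (Nat.pair (encS j) (t-1)), mem_Eraw.2 (Or.inr (Or.inr ⟨t-1, by omega, rfl⟩)), ?_⟩
          rw [hev2]
          congr 1
          omega
  have hvalA : ∀ i < k, ∀ j < l i, ∀ w ∈ Eraw r j, w ≠ Nat.pair 0 0 →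
      f (Nat.pair i w) ∈ A i j := by
    intro i hi j hj w hw hne
    rcases mem_Eraw.1 hw with rfl | rfl | ⟨m, hm, rfl⟩
    · exact absurd rfl hne
    · rw [hev1]; exact hgmem i hi j hj 0 (by omega)
    · rw [hev2]; exact hgmem i hi j hj (m+1) (by omega)
  have hvalP : ∀ i < k, ∀ j < l i, ∀ w ∈ Eraw r j, f (Nat.pair i w) ∈ pet i j := by
    intro i hi j hj w hw
    by_cases hne : w = Nat.pair 0 0
    · subst hne; rw [hev0]
      exact (hpet_eq i hi j hj) ▸ Finset.mem_insert_self _ _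
    · exact (hpet_eq i hi j hj) ▸ Finset.mem_insert_of_mem (hvalA i hi j hj w hw hne)
  have hAdisj : ∀ i < k, ∀ j < l i, ∀ j' < l i, j ≠ j' → ∀ y, y ∈ A i j → y ∈ A i j' → False := by
    intro i hi j hj j' hj' hne y hy hy'
    obtain ⟨-, -, -, hint⟩ := hsun i hi j hj
    have : y ∈ pet i j ∩ pet i j' :=
      Finset.mem_inter.2 ⟨Finset.mem_of_mem_erase hy, Finset.mem_of_mem_erase hy'⟩
    rw [hint j' hj' hne] at this
    exact (Finset.mem_erase.1 hy).1 (Finset.mem_singleton.1 this)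
  refine ⟨emap f (hIUnion k (fun i => expansion r (starG (l i)))), ?_, f, ?_, rfl⟩
  · intro e he
    rcases Finset.mem_image.1 he with ⟨E, hE, rfl⟩
    rw [forest_eq] at hE
    rcases Finset.mem_biUnion.1 hE with ⟨i, hi, hE2⟩
    rcases Finset.mem_image.1 hE2 with ⟨j, hj, rfl⟩
    rw [himgE i (Finset.mem_range.1 hi) j (Finset.mem_range.1 hj)]
    exact (hsun i (Finset.mem_range.1 hi) j (Finset.mem_range.1 hj)).1
  · intro u hu v hv huv
    rw [Finset.mem_coe, mem_hsupp_forest] at hu hv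
    obtain ⟨i, hi, j, hj, hu2⟩ := hu
    obtain ⟨i', hi', j', hj', hv2⟩ := hv
    rcases Finset.mem_image.1 hu2 with ⟨w, hw, rfl⟩
    rcases Finset.mem_image.1 hv2 with ⟨w', hw', rfl⟩
    by_cases hii : i = i'
    · subst hii
      by_cases hwc : w = Nat.pair 0 0
      · by_cases hwc' : w' = Nat.pair 0 0
        · rw [hwc, hwc']
        · exfalso
          have h1 := hvalA i hi j' hj' w' hw' hwc'
          rw [← huv, hwc, hev0] at h1
          exact (Finset.mem_erase.1 h1).1 rfl
      · by_cases hwc' : w' = Nat.pair 0 0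
        · exfalso
          have h1 := hvalA i hi j hj w hw hwc
          rw [huv, hwc', hev0] at h1
          exact (Finset.mem_erase.1 h1).1 rfl
        · by_cases hjj : j = j'
          · subst hjj
            -- same petal: use index injectivity
            rcases mem_Eraw.1 hw with rfl | rfl | ⟨m, hm, rfl⟩
            · exact absurd rfl hwc
            all_goals rcases mem_Eraw.1 hw' with rfl | rfl | ⟨m', hm', rfl⟩
            · exact absurd rfl hwc'
            · rfl
            · exfalso
              rw [hev1, hev2] at huv
              have := hginj i hi j hj 0 (by omega) (m'+1) (by omega) huv
              omega
            · exact absurd rfl hwc'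
            · exfalso
              rw [hev1, hev2] at huv
              have := hginj i hi j hj (m+1) (by omega) 0 (by omega) huv
              omega
            · rw [hev2, hev2] at huv
              have hmm := hginj i hi j hj (m+1) (by omega) (m'+1) (by omega) huv
              have : m = m' := by omega
              rw [this]
          · exfalso
            have h1 := hvalA i hi j hj w hw hwc
            have h2 := hvalA i hi j' hj' w' hw' hwc'
            rw [← huv] at h2
            exact hAdisj i hi j hj j' hj' hjj _ h1 h2
    · exfalso
      have h1 := hvalP i hi j hj w hw
      have h2 := hvalP i' hi' j' hj' w' hw'
      rw [← huv] at h2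
      have : f (Nat.pair i w) ∈ pet i j ∩ pet i' j' := Finset.mem_inter.2 ⟨h1, h2⟩
      rw [hcross i hi i' hi' hii j hj j' hj'] at this
      exact Finset.notMem_empty _ this

noncomputable def degS (H : HG) (S : Finset ℕ) : ℕ := (H.filter (fun e => S ⊆ e)).card

lemma degS_le {H : HG} {r n : ℕ} (hu : Uniform r H) (hs : hsupp H ⊆ Finset.range n)
    (S : Finset ℕ) : degS H S ≤ n ^ (r - S.card) := by
  calc degS H S ≤ ((Finset.range n).powersetCard (r - S.card)).card := by
        apply Finset.card_le_card_of_injOn (fun e => e \ S)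
        · intro e he
          rw [Finset.mem_coe, Finset.mem_filter] at he
          rw [Finset.mem_coe, Finset.mem_powersetCard]
          exact ⟨(Finset.sdiff_subset).trans ((edge_subset_hsupp he.1).trans hs),
            by rw [Finset.card_sdiff_of_subset he.2, hu e he.1]⟩
        · intro e he e' he' heq
          rw [Finset.mem_coe, Finset.mem_filter] at he he'
          dsimp only at heq
          rw [← Finset.sdiff_union_of_subset he.2, ← Finset.sdiff_union_of_subset he'.2, heq]
    _ ≤ n ^ (r - S.card) := card_pc_le

lemma degS_zero {H : HG} {r : ℕ} (hu : Uniform r H) {S : Finset ℕ} (hS : r < S.card) :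
    degS H S = 0 := by
  rw [degS, Finset.card_eq_zero, Finset.filter_eq_empty_iff]
  intro e he hSe
  have := Finset.card_le_card hSe
  rw [hu e he] at this
  omega

lemma matching_or_cover {w : ℕ} (t : ℕ) (Q : Finset (Finset ℕ)) (hw : ∀ q ∈ Q, q.card ≤ w) :
    (∃ g : ℕ → Finset ℕ, (∀ a < t, g a ∈ Q) ∧ ∀ a < t, ∀ b < t, a ≠ b → g a ∩ g b = ∅) ∨
      ∃ W : Finset ℕ, W.card ≤ t * w ∧ ∀ q ∈ Q, (q ∩ W).Nonempty := by
  induction t generalizing Q with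
  | zero => exact Or.inl ⟨fun _ => ∅, fun a ha => absurd ha (by omega), fun a ha => absurd ha (by omega)⟩
  | succ t ih =>
    rcases Finset.eq_empty_or_nonempty Q with rfl | ⟨q0, hq0⟩
    · exact Or.inr ⟨∅, by simp, by simp⟩
    · rcases ih (Q.filter (fun q => q ∩ q0 = ∅)) (fun q hq => hw q (Finset.filter_subset _ _ hq)) with
        ⟨g, hmem, hdisj⟩ | ⟨W, hWc, hWcov⟩
      · left
        refine ⟨fun a => if a < t then g a else q0, ?_, ?_⟩
        · intro a ha
          by_cases h : a < t
          · simp only [if_pos h]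
            exact Finset.filter_subset _ _ (hmem a h)
          · simp only [if_neg h]; exact hq0
        · intro a ha b hb hab
          by_cases h1 : a < t <;> by_cases h2 : b < t
          · simp only [if_pos h1, if_pos h2]; exact hdisj a h1 b h2 hab
          · simp only [if_pos h1, if_neg h2]
            exact (Finset.mem_filter.1 (hmem a h1)).2
          · simp only [if_neg h1, if_pos h2]
            rw [Finset.inter_comm]
            exact (Finset.mem_filter.1 (hmem b h2)).2
          · omega
      · right
        refine ⟨W ∪ q0, ?_, ?_⟩
        · calc (W ∪ q0).card ≤ W.card + q0.card := Finset.card_union_le _ _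
            _ ≤ t * w + w := Nat.add_le_add hWc (hw q0 hq0)
            _ = (t+1) * w := by ring
        · intro q hq
          by_cases h : q ∩ q0 = ∅
          · rcases hWcov q (Finset.mem_filter.2 ⟨hq, h⟩) with ⟨y, hy⟩
            exact ⟨y, Finset.mem_inter.2 ⟨(Finset.mem_inter.1 hy).1,
              Finset.mem_union_left _ (Finset.mem_inter.1 hy).2⟩⟩
          · rcases Finset.nonempty_iff_ne_empty.2 h with ⟨y, hy⟩
            exact ⟨y, Finset.mem_inter.2 ⟨(Finset.mem_inter.1 hy).1,
              Finset.mem_union_right _ (Finset.mem_inter.1 hy).2⟩⟩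

lemma card_filter_mem_pc_le {n c x : ℕ} {Q : Finset (Finset ℕ)}
    (hQ : Q ⊆ (Finset.range n).powersetCard c) :
    (Q.filter (fun q => x ∈ q)).card ≤ n ^ (c - 1) := by
  calc (Q.filter (fun q => x ∈ q)).card
      ≤ ((Finset.range n).powersetCard (c-1)).card := by
        apply Finset.card_le_card_of_injOn (fun q => q.erase x)
        · intro q hq
          rw [Finset.mem_coe, Finset.mem_filter] at hq
          have h2 := Finset.mem_powersetCard.1 (hQ hq.1)
          rw [Finset.mem_coe, Finset.mem_powersetCard]
          exact ⟨(Finset.erase_subset _ _).trans h2.1,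
            by rw [Finset.card_erase_of_mem hq.2, h2.2]⟩
        · intro q hq q' hq' heq
          rw [Finset.mem_coe, Finset.mem_filter] at hq hq'
          dsimp only at heq
          rw [← Finset.insert_erase hq.2, ← Finset.insert_erase hq'.2, heq]
    _ ≤ n ^ (c-1) := card_pc_le

lemma covered_card_le {n c : ℕ} {Q : Finset (Finset ℕ)} {W : Finset ℕ}
    (hQ : Q ⊆ (Finset.range n).powersetCard c)
    (hcov : ∀ q ∈ Q, (q ∩ W).Nonempty) :
    Q.card ≤ W.card * n ^ (c - 1) := by
  have hsub : Q ⊆ W.biUnion (fun x => Q.filter (fun q => x ∈ q)) := by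
    intro q hq
    rcases hcov q hq with ⟨y, hy⟩
    rcases Finset.mem_inter.1 hy with ⟨h1, h2⟩
    exact Finset.mem_biUnion.2 ⟨y, h2, Finset.mem_filter.2 ⟨hq, h1⟩⟩
  calc Q.card ≤ (W.biUnion (fun x => Q.filter (fun q => x ∈ q))).card := Finset.card_le_card hsub
    _ ≤ ∑ x ∈ W, (Q.filter (fun q => x ∈ q)).card := Finset.card_biUnion_le
    _ ≤ ∑ _x ∈ W, n ^ (c-1) := Finset.sum_le_sum (fun x _ => card_filter_mem_pc_le hQ)
    _ = W.card * n ^ (c-1) := by rw [Finset.sum_const, smul_eq_mul]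

lemma exists_enum {s : Finset ℕ} {m : ℕ} (h : m ≤ s.card) :
    ∃ g : ℕ → ℕ, (∀ t < m, g t ∈ s) ∧ ∀ t < m, ∀ t' < m, t ≠ t' → g t ≠ g t' := by
  induction m generalizing s with
  | zero => exact ⟨id, fun t ht => absurd ht (by omega), fun t ht => absurd ht (by omega)⟩
  | succ m ih =>
    have hne : s.Nonempty := Finset.card_pos.1 (by omega)
    obtain ⟨a, ha⟩ := hne
    have hcard : m ≤ (s.erase a).card := by
      rw [Finset.card_erase_of_mem ha]; omega
    obtain ⟨g, hmem, hinj⟩ := ih hcard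
    refine ⟨fun t => if t < m then g t else a, ?_, ?_⟩
    · intro t ht
      by_cases h2 : t < m
      · simp only [if_pos h2]
        exact Finset.mem_of_mem_erase (hmem t h2)
      · simp only [if_neg h2]; exact ha
    · intro t ht t' ht' htt
      by_cases h1 : t < m <;> by_cases h2 : t' < m
      · simpa [if_pos h1, if_pos h2] using hinj t h1 t' h2 htt
      · simp only [if_pos h1, if_neg h2]
        exact fun hc => (Finset.mem_erase.1 (hmem t h1)).1 hc
      · simp only [if_neg h1, if_pos h2]
        exact fun hc => (Finset.mem_erase.1 (hmem t' h2)).1 hc.symm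
      · omega

lemma exists_cover {H : HG} {r ℓ : ℕ} (hu : Uniform r H) (hr : 3 ≤ r)
    (hfree : ¬∃ x pet, SunAt H r x ℓ pet) (v : ℕ) :
    ∃ W : Finset ℕ, W.card ≤ ℓ * (r-1) ∧ v ∉ W ∧
      ∀ e ∈ H, v ∈ e → ((e.erase v) ∩ W).Nonempty := by
  set link : Finset (Finset ℕ) := (H.filter (fun e => v ∈ e)).image (fun e => e.erase v) with hlink
  have hwcard : ∀ q ∈ link, q.card ≤ r - 1 := by
    intro q hq
    rcases Finset.mem_image.1 hq with ⟨e, he, rfl⟩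
    rw [Finset.mem_filter] at he
    rw [Finset.card_erase_of_mem he.2, hu e he.1]
  rcases matching_or_cover ℓ link hwcard with ⟨g, hmem, hdisj⟩ | ⟨W, hWc, hWcov⟩
  · exfalso
    apply hfree
    refine ⟨v, fun j => insert v (g j), ?_⟩
    intro j hj
    dsimp only
    rcases Finset.mem_image.1 (hmem j hj) with ⟨e, he, hge⟩
    rw [Finset.mem_filter] at he
    have hvg : v ∉ g j := by rw [← hge]; exact Finset.notMem_erase _ _
    have hins : insert v (g j) = e := by rw [← hge, Finset.insert_erase he.2]
    refine ⟨by rw [hins]; exact he.1, Finset.mem_insert_self _ _, by rw [hins]; exact hu e he.1, ?_⟩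
    intro j' hj' hne
    have hvg' : v ∉ g j' := by
      rcases Finset.mem_image.1 (hmem j' hj') with ⟨e', he', hge'⟩
      rw [← hge']; exact Finset.notMem_erase _ _
    ext y
    simp only [Finset.mem_inter, Finset.mem_insert, Finset.mem_singleton]
    constructor
    · rintro ⟨(rfl | hy1), (h2 | hy2)⟩
      · rfl
      · rfl
      · exact absurd h2.symm (by rintro rfl; exact hvg hy1)
      · exfalso
        have : y ∈ g j ∩ g j' := Finset.mem_inter.2 ⟨hy1, hy2⟩
        rw [hdisj j hj j' hj' hne] at this
        exact Finset.notMem_empty _ this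
    · rintro rfl
      exact ⟨Or.inl rfl, Or.inl rfl⟩
  · refine ⟨W.erase v, (Finset.card_erase_le).trans hWc, Finset.notMem_erase _ _, ?_⟩
    intro e he hv
    rcases hWcov (e.erase v) (Finset.mem_image.2 ⟨e, Finset.mem_filter.2 ⟨he, hv⟩, rfl⟩) with ⟨y, hy⟩
    rcases Finset.mem_inter.1 hy with ⟨h1, h2⟩
    exact ⟨y, Finset.mem_inter.2 ⟨h1, Finset.mem_erase.2 ⟨(Finset.mem_erase.1 h1).1, h2⟩⟩⟩

lemma pow_step {n a b : ℕ} (h : a + 1 = b) : n * n ^ a = n ^ b := by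
  subst h; rw [pow_succ]; ring

lemma le_mul_self_left {a m : ℕ} (h : 1 ≤ m) : a ≤ m * a := by
  calc a = 1 * a := (one_mul a).symm
    _ ≤ m * a := Nat.mul_le_mul_right a h

theorem edge_bound {H : HG} {r n ℓ : ℕ} (hr : 3 ≤ r) (hn : 1 ≤ n) (hl : 1 ≤ ℓ)
    (hu : Uniform r H) (hs : hsupp H ⊆ Finset.range n)
    (hfree : ¬∃ x pet, SunAt H r x ℓ pet) :
    H.card ≤ ((ℓ*r)*(ℓ*r+1) + 2*((ℓ*r)*ℓ)) * n ^ (r-2) := by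
  classical
  have hWex : ∀ v : ℕ, ∃ W : Finset ℕ, W.card ≤ ℓ * (r-1) ∧ v ∉ W ∧
      ∀ e ∈ H, v ∈ e → ((e.erase v) ∩ W).Nonempty := fun v => exists_cover hu hr hfree v
  choose W hWcard hWv hWcov using hWex
  have hWD : ∀ v, (W v).card ≤ ℓ * r := fun v =>
    (hWcard v).trans (Nat.mul_le_mul_left ℓ (by omega))
  set z : ℕ := (ℓ*r + 1) * n ^ (r-3) with hz
  set Γ : Finset (Finset ℕ) :=
    ((Finset.range n).powersetCard 2).filter (fun p => z ≤ degS H p) with hΓ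
  have hΓpair : ∀ p ∈ Γ, p ⊆ Finset.range n ∧ p.card = 2 ∧ z ≤ degS H p := by
    intro p hp
    rw [hΓ, Finset.mem_filter, Finset.mem_powersetCard] at hp
    exact ⟨hp.1.1, hp.1.2, hp.2⟩
  -- Step 1 : no vertex has ℓ heavy neighbours
  have hstep1 : ∀ v : ℕ, ((Finset.range n).filter
      (fun w => w ≠ v ∧ ({v, w} : Finset ℕ) ∈ Γ)).card < ℓ := by
    intro v
    by_contra hcon
    push_neg at hcon
    obtain ⟨wN, hwmem, hwinj⟩ := exists_enum hcon
    have hwprop : ∀ a < ℓ, wN a ≠ v ∧ ({v, wN a} : Finset ℕ) ∈ Γ := by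
      intro a ha
      have := hwmem a ha
      rw [Finset.mem_filter] at this
      exact this.2
    have hgreedy : ∀ t, t ≤ ℓ → ∃ pet : ℕ → Finset ℕ, ∀ j < t,
        pet j ∈ H ∧ v ∈ pet j ∧ wN j ∈ pet j ∧
        (∀ j' < t, j ≠ j' → pet j ∩ pet j' = {v}) ∧
        (∀ a < ℓ, a ≠ j → wN a ∉ pet j) := by
      intro t
      induction t with
      | zero => exact fun _ => ⟨fun _ => ∅, fun j hj => absurd hj (by omega)⟩
      | succ t iht =>
        intro ht1
        obtain ⟨pet, hpet⟩ := iht (by omega)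
        set BAD : Finset ℕ :=
          ((Finset.range t).biUnion (fun j => (pet j).erase v)) ∪
            (((Finset.range ℓ).image wN).erase (wN t)) with hBAD
        have hBADcard : BAD.card ≤ ℓ * (r-1) + ℓ := by
          calc BAD.card ≤ ((Finset.range t).biUnion (fun j => (pet j).erase v)).card
              + (((Finset.range ℓ).image wN).erase (wN t)).card := Finset.card_union_le _ _
            _ ≤ ℓ * (r-1) + ℓ := by
              apply Nat.add_le_add
              · calc ((Finset.range t).biUnion (fun j => (pet j).erase v)).card
                    ≤ ∑ j ∈ Finset.range t, ((pet j).erase v).card := Finset.card_biUnion_le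
                  _ ≤ ∑ _j ∈ Finset.range t, (r-1) := by
                      apply Finset.sum_le_sum
                      intro j hj
                      have hj' := Finset.mem_range.1 hj
                      rw [Finset.card_erase_of_mem (hpet j hj').2.1, hu _ (hpet j hj').1]
                  _ = t * (r-1) := by rw [Finset.sum_const, smul_eq_mul, Finset.card_range]
                  _ ≤ ℓ * (r-1) := Nat.mul_le_mul_right _ (by omega)
              · calc (((Finset.range ℓ).image wN).erase (wN t)).card
                    ≤ ((Finset.range ℓ).image wN).card := Finset.card_erase_le
                  _ ≤ ℓ := (Finset.card_image_le).trans (le_of_eq (Finset.card_range ℓ))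
        have hvBAD : v ∉ BAD := by
          rw [hBAD]
          simp only [Finset.mem_union, Finset.mem_biUnion, not_or]
          constructor
          · rintro ⟨j, hj, hmem⟩
            exact (Finset.mem_erase.1 hmem).1 rfl
          · intro hmem
            rcases Finset.mem_image.1 (Finset.mem_of_mem_erase hmem) with ⟨a, ha, hav⟩
            exact (hwprop a (Finset.mem_range.1 ha)).1 hav
        have hwtBAD : wN t ∉ BAD := by
          rw [hBAD]
          simp only [Finset.mem_union, Finset.mem_biUnion, not_or]
          constructor
          · rintro ⟨j, hj, hmem⟩
            have hj' := Finset.mem_range.1 hj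
            exact ((hpet j hj').2.2.2.2 t (by omega) (by omega)) (Finset.mem_of_mem_erase hmem)
          · exact fun hmem => (Finset.mem_erase.1 hmem).1 rfl
        have hzle : z ≤ degS H {v, wN t} := (hΓpair _ (hwprop t (by omega)).2).2.2
        have hbadcount : (H.filter (fun e => ({v, wN t} : Finset ℕ) ⊆ e ∧ (e ∩ BAD).Nonempty)).card
            ≤ (ℓ * (r-1) + ℓ) * n ^ (r-3) := by
          calc (H.filter (fun e => ({v, wN t} : Finset ℕ) ⊆ e ∧ (e ∩ BAD).Nonempty)).card
              ≤ (BAD.biUnion (fun b => H.filter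
                  (fun e => insert b ({v, wN t} : Finset ℕ) ⊆ e))).card := by
                apply Finset.card_le_card
                intro e he
                rw [Finset.mem_filter] at he
                obtain ⟨heH, hsub, ⟨b, hb⟩⟩ := he
                rcases Finset.mem_inter.1 hb with ⟨hbe, hbB⟩
                exact Finset.mem_biUnion.2 ⟨b, hbB, Finset.mem_filter.2 ⟨heH,
                  Finset.insert_subset hbe hsub⟩⟩
            _ ≤ ∑ b ∈ BAD, (H.filter (fun e => insert b ({v, wN t} : Finset ℕ) ⊆ e)).card :=
                Finset.card_biUnion_le
            _ ≤ ∑ _b ∈ BAD, n ^ (r-3) := by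
                apply Finset.sum_le_sum
                intro b hbB
                have hb3 : (insert b ({v, wN t} : Finset ℕ)).card = 3 := by
                  have hbv : b ≠ v := fun hc => hvBAD (hc ▸ hbB)
                  have hbw : b ≠ wN t := fun hc => hwtBAD (hc ▸ hbB)
                  have hvw : v ≠ wN t := fun hc => (hwprop t (by omega)).1 hc.symm
                  rw [Finset.card_insert_of_notMem (by simp [hbv, hbw]),
                    Finset.card_insert_of_notMem (by simp [hvw]), Finset.card_singleton]
                have h4 := degS_le hu hs (insert b ({v, wN t} : Finset ℕ))
                rwa [hb3] at h4
            _ = BAD.card * n ^ (r-3) := by rw [Finset.sum_const, smul_eq_mul]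
            _ ≤ (ℓ * (r-1) + ℓ) * n ^ (r-3) := Nat.mul_le_mul_right _ hBADcard
        have hlr : ℓ * (r-1) + ℓ = ℓ * r := by
          rw [← Nat.mul_succ]
          congr 1
          omega
        have hlt : (ℓ * (r-1) + ℓ) * n ^ (r-3) < z := by
          rw [hz, hlr]
          exact (Nat.mul_lt_mul_right (pow_pos (show 0 < n by omega) (r-3))).2 (by omega)
        have hex : (H.filter (fun e => ({v, wN t} : Finset ℕ) ⊆ e ∧ e ∩ BAD = ∅)).Nonempty := by
          rw [Finset.nonempty_iff_ne_empty]
          intro hempty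
          have hsplit : H.filter (fun e => ({v, wN t} : Finset ℕ) ⊆ e) ⊆
              (H.filter (fun e => ({v, wN t} : Finset ℕ) ⊆ e ∧ (e ∩ BAD).Nonempty)) ∪
              (H.filter (fun e => ({v, wN t} : Finset ℕ) ⊆ e ∧ e ∩ BAD = ∅)) := by
            intro e he
            rw [Finset.mem_filter] at he
            rcases Finset.eq_empty_or_nonempty (e ∩ BAD) with hie | hie
            · exact Finset.mem_union_right _ (Finset.mem_filter.2 ⟨he.1, he.2, hie⟩)
            · exact Finset.mem_union_left _ (Finset.mem_filter.2 ⟨he.1, he.2, hie⟩)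
          have hcl : degS H {v, wN t} ≤ (ℓ * (r-1) + ℓ) * n ^ (r-3) := by
            calc degS H {v, wN t} ≤ _ := Finset.card_le_card hsplit
              _ ≤ _ + _ := Finset.card_union_le _ _
              _ ≤ (ℓ * (r-1) + ℓ) * n ^ (r-3) + 0 := by
                  refine Nat.add_le_add hbadcount (le_of_eq ?_)
                  rw [hempty, Finset.card_empty]
              _ = (ℓ * (r-1) + ℓ) * n ^ (r-3) := by omega
          omega
        obtain ⟨e, he⟩ := hex
        rw [Finset.mem_filter] at he
        obtain ⟨heH, hesub, heBAD⟩ := he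
        have hdisjBAD : ∀ y ∈ e, y ∉ BAD := by
          intro y hy hyB
          have hmem2 : y ∈ e ∩ BAD := Finset.mem_inter.2 ⟨hy, hyB⟩
          rw [heBAD] at hmem2
          exact Finset.notMem_empty _ hmem2
        refine ⟨fun j => if j = t then e else pet j, ?_⟩
        intro j hj
        by_cases hjt : j = t
        · subst hjt
          simp only [if_pos rfl]
          refine ⟨heH, hesub (by simp), hesub (by simp), ?_, ?_⟩
          · intro j' hj' hne
            have hj'lt : j' < j := by omega
            simp only [if_neg (by omega : ¬ j' = j)]
            ext y
            simp only [Finset.mem_inter, Finset.mem_singleton]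
            constructor
            · rintro ⟨hy1, hy2⟩
              by_contra hyv
              apply hdisjBAD y hy1
              rw [hBAD]
              exact Finset.mem_union_left _ (Finset.mem_biUnion.2 ⟨j', Finset.mem_range.2 hj'lt,
                Finset.mem_erase.2 ⟨hyv, hy2⟩⟩)
            · rintro rfl
              exact ⟨hesub (by simp), (hpet j' hj'lt).2.1⟩
          · intro a ha hat hmem
            apply hdisjBAD _ hmem
            rw [hBAD]
            apply Finset.mem_union_right
            exact Finset.mem_erase.2 ⟨hwinj a ha j (by omega) hat,
              Finset.mem_image.2 ⟨a, Finset.mem_range.2 ha, rfl⟩⟩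
        · have hjlt : j < t := by omega
          simp only [if_neg hjt]
          obtain ⟨h1, h2, h3, h4, h5⟩ := hpet j hjlt
          refine ⟨h1, h2, h3, ?_, h5⟩
          intro j' hj' hne
          by_cases hj't : j' = t
          · subst hj't
            simp only [if_pos rfl]
            ext y
            simp only [Finset.mem_inter, Finset.mem_singleton]
            constructor
            · rintro ⟨hy1, hy2⟩
              by_contra hyv
              apply hdisjBAD y hy2
              rw [hBAD]
              exact Finset.mem_union_left _ (Finset.mem_biUnion.2 ⟨j, Finset.mem_range.2 hjlt,
                Finset.mem_erase.2 ⟨hyv, hy1⟩⟩)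
            · rintro rfl
              exact ⟨h2, hesub (by simp)⟩
          · simp only [if_neg hj't]
            exact h4 j' (by omega) hne
    obtain ⟨pet, hpet⟩ := hgreedy ℓ (le_refl _)
    apply hfree
    refine ⟨v, pet, ?_⟩
    intro j hj
    obtain ⟨h1, h2, h3, h4, h5⟩ := hpet j hj
    exact ⟨h1, h2, hu _ h1, fun j' hj' hne => h4 j' hj' hne⟩
  -- Step 2 : vertex degrees in Γ
  have hstep2 : ∀ w : ℕ, (Γ.filter (fun p => w ∈ p)).card ≤ ℓ := by
    intro w
    have hmap : ∀ p ∈ Γ.filter (fun p => w ∈ p), ∃ u, p.erase w = {u} := by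
      intro p hp
      rw [Finset.mem_filter] at hp
      have h2 := (hΓpair p hp.1).2.1
      have : (p.erase w).card = 1 := by rw [Finset.card_erase_of_mem hp.2, h2]
      exact Finset.card_eq_one.1 this
    calc (Γ.filter (fun p => w ∈ p)).card
        ≤ ((Finset.range n).filter (fun u => u ≠ w ∧ ({w, u} : Finset ℕ) ∈ Γ)).card := by
          apply Finset.card_le_card_of_injOn (fun p => (p.erase w).sum id)
          · intro p hp
            obtain ⟨u, hu'⟩ := hmap p hp
            rw [Finset.mem_coe, Finset.mem_filter] at hp
            obtain ⟨hsub, h2, -⟩ := hΓpair p hp.1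
            have huw : u ≠ w := by
              have : u ∈ p.erase w := hu' ▸ Finset.mem_singleton_self u
              exact (Finset.mem_erase.1 this).1
            have hup : u ∈ p := by
              have : u ∈ p.erase w := hu' ▸ Finset.mem_singleton_self u
              exact Finset.mem_of_mem_erase this
            have hpeq : p = {w, u} := by
              apply (Finset.eq_of_subset_of_card_le (Finset.insert_subset hp.2
                (by rw [Finset.singleton_subset_iff]; exact hup)) ?_).symm
              rw [h2, Finset.card_insert_of_notMem (by simp [Ne.symm huw]), Finset.card_singleton]
            simp only [Finset.mem_coe]
            rw [hu', Finset.sum_singleton]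
            rw [Finset.mem_filter]
            exact ⟨hsub hup, huw, hpeq ▸ hp.1⟩
          · intro p hp p' hp' heq
            obtain ⟨u, hu1⟩ := hmap p (by exact_mod_cast hp)
            obtain ⟨u', hu2⟩ := hmap p' (by exact_mod_cast hp')
            rw [Finset.mem_coe, Finset.mem_filter] at hp hp'
            dsimp only at heq
            rw [hu1, hu2, Finset.sum_singleton, Finset.sum_singleton] at heq
            simp only [id] at heq
            have e1 : p = insert w (p.erase w) := (Finset.insert_erase hp.2).symm
            have e2 : p' = insert w (p'.erase w) := (Finset.insert_erase hp'.2).symm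
            rw [e1, e2, hu1, hu2, heq]
      _ ≤ ℓ := le_of_lt (hstep1 w)
  -- Γ is small
  have hΓcard : Γ.card ≤ n * ℓ := by
    calc Γ.card ≤ ((Finset.range n).biUnion (fun w => Γ.filter (fun p => w ∈ p))).card := by
          apply Finset.card_le_card
          intro p hp
          obtain ⟨hsub, hc2, -⟩ := hΓpair p hp
          obtain ⟨y, hy⟩ := Finset.card_pos.1 (by omega : 0 < p.card)
          exact Finset.mem_biUnion.2 ⟨y, hsub hy, Finset.mem_filter.2 ⟨hp, hy⟩⟩
      _ ≤ ∑ w ∈ Finset.range n, (Γ.filter (fun p => w ∈ p)).card := Finset.card_biUnion_le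
      _ ≤ ∑ _w ∈ Finset.range n, ℓ := Finset.sum_le_sum (fun w _ => hstep2 w)
      _ = n * ℓ := by rw [Finset.sum_const, smul_eq_mul, Finset.card_range]
  -- key identity
  have hident : ∀ p ∈ Γ, (r-2) * degS H p
      = ∑ v ∈ Finset.range n, (H.filter (fun e => p ⊆ e ∧ v ∈ e \ p)).card := by
    intro p hp
    obtain ⟨hsub, hc2, -⟩ := hΓpair p hp
    calc (r-2) * degS H p = ∑ _e ∈ H.filter (fun e => p ⊆ e), (r-2) := by
          rw [Finset.sum_const, smul_eq_mul, degS, Nat.mul_comm]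
      _ = ∑ e ∈ H.filter (fun e => p ⊆ e), (e \ p).card := by
          apply Finset.sum_congr rfl
          intro e he
          rw [Finset.mem_filter] at he
          rw [Finset.card_sdiff_of_subset he.2, hu e he.1, hc2]
      _ = ∑ e ∈ H.filter (fun e => p ⊆ e), ∑ v ∈ Finset.range n, (if v ∈ e \ p then 1 else 0) := by
          apply Finset.sum_congr rfl
          intro e he
          rw [Finset.mem_filter] at he
          have hfl : (Finset.range n).filter (fun v => v ∈ e \ p) = e \ p := by
            rw [Finset.filter_mem_eq_inter, Finset.inter_eq_right]
            exact (Finset.sdiff_subset).trans ((edge_subset_hsupp he.1).trans hs)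
          rw [← Finset.card_filter, hfl]
      _ = ∑ v ∈ Finset.range n, ∑ e ∈ H.filter (fun e => p ⊆ e), (if v ∈ e \ p then 1 else 0) :=
          Finset.sum_comm
      _ = ∑ v ∈ Finset.range n, (H.filter (fun e => p ⊆ e ∧ v ∈ e \ p)).card := by
          apply Finset.sum_congr rfl
          intro v _
          rw [← Finset.filter_filter, Finset.card_filter]
  -- per-vertex bound
  have hTv : ∀ v, ∑ p ∈ Γ, (H.filter (fun e => p ⊆ e ∧ v ∈ e \ p)).card
      ≤ 2*((ℓ*r)*ℓ) * n ^ (r-3) := by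
    intro v
    have hterm1 : ∀ p ∈ Γ, (H.filter (fun e => p ⊆ e ∧ v ∈ e \ p)).card ≤ n ^ (r-3) := by
      intro p hp
      by_cases hvp : v ∈ p
      · have : H.filter (fun e => p ⊆ e ∧ v ∈ e \ p) = ∅ := by
          rw [Finset.filter_eq_empty_iff]
          intro e _ hcond
          exact (Finset.mem_sdiff.1 hcond.2).2 hvp
        rw [this, Finset.card_empty]
        exact Nat.zero_le _
      · obtain ⟨hsub, hc2, -⟩ := hΓpair p hp
        calc (H.filter (fun e => p ⊆ e ∧ v ∈ e \ p)).card
            ≤ degS H (insert v p) := by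
              apply Finset.card_le_card
              intro e he
              rw [Finset.mem_filter] at he ⊢
              exact ⟨he.1, Finset.insert_subset (Finset.mem_sdiff.1 he.2.2).1 he.2.1⟩
          _ ≤ n ^ (r - 3) := by
              have h4 := degS_le hu hs (insert v p)
              rwa [Finset.card_insert_of_notMem hvp, hc2] at h4
    have hsum1 : ∑ p ∈ Γ.filter (fun p => (p ∩ W v).Nonempty),
        (H.filter (fun e => p ⊆ e ∧ v ∈ e \ p)).card ≤ ((ℓ*r)*ℓ) * n ^ (r-3) := by
      calc ∑ p ∈ Γ.filter (fun p => (p ∩ W v).Nonempty),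
            (H.filter (fun e => p ⊆ e ∧ v ∈ e \ p)).card
          ≤ ∑ _p ∈ Γ.filter (fun p => (p ∩ W v).Nonempty), n ^ (r-3) :=
            Finset.sum_le_sum (fun p hp => hterm1 p (Finset.filter_subset _ _ hp))
        _ = (Γ.filter (fun p => (p ∩ W v).Nonempty)).card * n ^ (r-3) := by
            rw [Finset.sum_const, smul_eq_mul]
        _ ≤ ((ℓ*r)*ℓ) * n ^ (r-3) := by
            apply Nat.mul_le_mul_right
            calc (Γ.filter (fun p => (p ∩ W v).Nonempty)).card
                ≤ ((W v).biUnion (fun w => Γ.filter (fun p => w ∈ p))).card := by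
                  apply Finset.card_le_card
                  intro p hp
                  rw [Finset.mem_filter] at hp
                  obtain ⟨y, hy⟩ := hp.2
                  rcases Finset.mem_inter.1 hy with ⟨h1, h2⟩
                  exact Finset.mem_biUnion.2 ⟨y, h2, Finset.mem_filter.2 ⟨hp.1, h1⟩⟩
              _ ≤ ∑ w ∈ W v, (Γ.filter (fun p => w ∈ p)).card := Finset.card_biUnion_le
              _ ≤ ∑ _w ∈ W v, ℓ := Finset.sum_le_sum (fun w _ => hstep2 w)
              _ = (W v).card * ℓ := by rw [Finset.sum_const, smul_eq_mul]
              _ ≤ (ℓ*r)*ℓ := Nat.mul_le_mul_right _ (hWD v)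
    have hsum2 : ∑ p ∈ Γ.filter (fun p => ¬ (p ∩ W v).Nonempty),
        (H.filter (fun e => p ⊆ e ∧ v ∈ e \ p)).card ≤ ℓ*((ℓ*r)) * n ^ (r-3) := by
      have hterm2 : ∀ p ∈ Γ.filter (fun p => ¬ (p ∩ W v).Nonempty),
          (H.filter (fun e => p ⊆ e ∧ v ∈ e \ p)).card ≤ (ℓ*r) * n ^ (r-4) := by
        intro p hp
        rw [Finset.mem_filter] at hp
        have hpW : p ∩ W v = ∅ := Finset.not_nonempty_iff_eq_empty.1 hp.2
        by_cases hvp : v ∈ p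
        · have hempty : H.filter (fun e => p ⊆ e ∧ v ∈ e \ p) = ∅ := by
            rw [Finset.filter_eq_empty_iff]
            intro e _ hcond
            exact (Finset.mem_sdiff.1 hcond.2).2 hvp
          rw [hempty, Finset.card_empty]
          exact Nat.zero_le _
        · obtain ⟨hsub, hc2, -⟩ := hΓpair p hp.1
          calc (H.filter (fun e => p ⊆ e ∧ v ∈ e \ p)).card
              ≤ ((W v).biUnion (fun w => H.filter
                  (fun e => insert w (insert v p) ⊆ e))).card := by
                apply Finset.card_le_card
                intro e he
                rw [Finset.mem_filter] at he
                obtain ⟨heH, hpe, hve⟩ := he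
                have hv' : v ∈ e := (Finset.mem_sdiff.1 hve).1
                obtain ⟨w, hw⟩ := hWcov v e heH hv'
                rcases Finset.mem_inter.1 hw with ⟨hw1, hw2⟩
                refine Finset.mem_biUnion.2 ⟨w, hw2, Finset.mem_filter.2 ⟨heH, ?_⟩⟩
                exact Finset.insert_subset (Finset.mem_of_mem_erase hw1)
                  (Finset.insert_subset hv' hpe)
            _ ≤ ∑ w ∈ W v, (H.filter (fun e => insert w (insert v p) ⊆ e)).card :=
                Finset.card_biUnion_le
            _ ≤ ∑ _w ∈ W v, n ^ (r-4) := by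
                apply Finset.sum_le_sum
                intro w hw
                by_cases hwvp : w ∈ insert v p
                · -- then w = v or w ∈ p; both impossible
                  exfalso
                  rcases Finset.mem_insert.1 hwvp with rfl | hwp
                  · exact hWv _ hw
                  · have : w ∈ p ∩ W v := Finset.mem_inter.2 ⟨hwp, hw⟩
                    rw [hpW] at this
                    exact Finset.notMem_empty _ this
                · have hc4 : (insert w (insert v p)).card = 4 := by
                    rw [Finset.card_insert_of_notMem hwvp,
                      Finset.card_insert_of_notMem hvp, hc2]
                  have h4 := degS_le hu hs (insert w (insert v p))
                  rw [hc4] at h4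
                  exact h4
            _ = (W v).card * n ^ (r-4) := by rw [Finset.sum_const, smul_eq_mul]
            _ ≤ (ℓ*r) * n ^ (r-4) := Nat.mul_le_mul_right _ (hWD v)
      rcases Nat.lt_or_ge r 4 with hr4 | hr4
      · -- r = 3 : every term is 0
        have hterm0 : ∀ p ∈ Γ.filter (fun p => ¬ (p ∩ W v).Nonempty),
            (H.filter (fun e => p ⊆ e ∧ v ∈ e \ p)).card = 0 := by
          intro p hp
          rw [Finset.mem_filter] at hp
          have hpW : p ∩ W v = ∅ := Finset.not_nonempty_iff_eq_empty.1 hp.2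
          rw [Finset.card_eq_zero, Finset.filter_eq_empty_iff]
          intro e he hcond
          obtain ⟨hpe, hve⟩ := hcond
          have hv' : v ∈ e := (Finset.mem_sdiff.1 hve).1
          have hvp : v ∉ p := (Finset.mem_sdiff.1 hve).2
          obtain ⟨w, hw⟩ := hWcov v e he hv'
          rcases Finset.mem_inter.1 hw with ⟨hw1, hw2⟩
          have hwe : w ∈ e := Finset.mem_of_mem_erase hw1
          have hwv : w ≠ v := (Finset.mem_erase.1 hw1).1
          have hwp : w ∉ p := by
            intro hc
            have : w ∈ p ∩ W v := Finset.mem_inter.2 ⟨hc, hw2⟩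
            rw [hpW] at this
            exact Finset.notMem_empty _ this
          obtain ⟨hsub, hc2, -⟩ := hΓpair p hp.1
          have hsubst : insert w (insert v p) ⊆ e :=
            Finset.insert_subset hwe (Finset.insert_subset hv' hpe)
          have hcard4 : (insert w (insert v p)).card = 4 := by
            rw [Finset.card_insert_of_notMem (by simp [hwv, hwp]),
              Finset.card_insert_of_notMem hvp, hc2]
          have := Finset.card_le_card hsubst
          rw [hcard4, hu e he] at this
          omega
        rw [Finset.sum_congr rfl hterm0]
        simp
      · calc ∑ p ∈ Γ.filter (fun p => ¬ (p ∩ W v).Nonempty),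
            (H.filter (fun e => p ⊆ e ∧ v ∈ e \ p)).card
            ≤ ∑ _p ∈ Γ.filter (fun p => ¬ (p ∩ W v).Nonempty), (ℓ*r) * n ^ (r-4) :=
              Finset.sum_le_sum hterm2
          _ = (Γ.filter (fun p => ¬ (p ∩ W v).Nonempty)).card * ((ℓ*r) * n ^ (r-4)) := by
              rw [Finset.sum_const, smul_eq_mul]
          _ ≤ (n * ℓ) * ((ℓ*r) * n ^ (r-4)) := by
              apply Nat.mul_le_mul_right
              exact ((Finset.card_filter_le _ _).trans hΓcard)
          _ = ℓ*(ℓ*r) * (n * n ^ (r-4)) := by ring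
          _ = ℓ*(ℓ*r) * n ^ (r-3) := by rw [pow_step (by omega : r - 4 + 1 = r - 3)]
    calc ∑ p ∈ Γ, (H.filter (fun e => p ⊆ e ∧ v ∈ e \ p)).card
        = ∑ p ∈ Γ.filter (fun p => (p ∩ W v).Nonempty),
            (H.filter (fun e => p ⊆ e ∧ v ∈ e \ p)).card
          + ∑ p ∈ Γ.filter (fun p => ¬ (p ∩ W v).Nonempty),
            (H.filter (fun e => p ⊆ e ∧ v ∈ e \ p)).card :=
          (Finset.sum_filter_add_sum_filter_not _ _ _).symm
      _ ≤ ((ℓ*r)*ℓ) * n ^ (r-3) + ℓ*(ℓ*r) * n ^ (r-3) := Nat.add_le_add hsum1 hsum2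
      _ = 2*((ℓ*r)*ℓ) * n ^ (r-3) := by ring
  -- sum of heavy degrees
  have hheavysum : ∑ p ∈ Γ, degS H p ≤ 2*((ℓ*r)*ℓ) * n ^ (r-2) := by
    have h1 : (r-2) * ∑ p ∈ Γ, degS H p
        = ∑ v ∈ Finset.range n, ∑ p ∈ Γ, (H.filter (fun e => p ⊆ e ∧ v ∈ e \ p)).card := by
      rw [Finset.mul_sum]
      rw [Finset.sum_congr rfl hident]
      exact Finset.sum_comm
    have h2 : (r-2) * ∑ p ∈ Γ, degS H p ≤ n * (2*((ℓ*r)*ℓ) * n ^ (r-3)) := by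
      rw [h1]
      calc ∑ v ∈ Finset.range n, ∑ p ∈ Γ, (H.filter (fun e => p ⊆ e ∧ v ∈ e \ p)).card
          ≤ ∑ _v ∈ Finset.range n, 2*((ℓ*r)*ℓ) * n ^ (r-3) :=
            Finset.sum_le_sum (fun v _ => hTv v)
        _ = n * (2*((ℓ*r)*ℓ) * n ^ (r-3)) := by
            rw [Finset.sum_const, smul_eq_mul, Finset.card_range]
    calc ∑ p ∈ Γ, degS H p ≤ (r-2) * ∑ p ∈ Γ, degS H p := le_mul_self_left (by omega)
      _ ≤ n * (2*((ℓ*r)*ℓ) * n ^ (r-3)) := h2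
      _ = 2*((ℓ*r)*ℓ) * (n * n ^ (r-3)) := by ring
      _ = 2*((ℓ*r)*ℓ) * n ^ (r-2) := by rw [pow_step (by omega : r - 3 + 1 = r - 2)]
  -- light edges
  have hpairlight : ∀ v, ∀ w ∈ W v,
      (H.filter (fun e => ({v,w} : Finset ℕ) ⊆ e ∧ ¬ ∃ p ∈ Γ, p ⊆ e)).card ≤ z := by
    intro v w hw
    rcases Finset.eq_empty_or_nonempty
        (H.filter (fun e => ({v,w} : Finset ℕ) ⊆ e ∧ ¬ ∃ p ∈ Γ, p ⊆ e)) with he | ⟨e0, he0⟩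
    · rw [he, Finset.card_empty]
      exact Nat.zero_le _
    · rw [Finset.mem_filter] at he0
      obtain ⟨he0H, hsub0, hlight0⟩ := he0
      have hvw : v ≠ w := by
        rintro rfl
        exact hWv v hw
      have hpair_pc : ({v,w} : Finset ℕ) ∈ (Finset.range n).powersetCard 2 := by
        rw [Finset.mem_powersetCard]
        refine ⟨hsub0.trans ((edge_subset_hsupp he0H).trans hs), ?_⟩
        rw [Finset.card_insert_of_notMem (by simp [hvw]), Finset.card_singleton]
      have hnotΓ : ({v,w} : Finset ℕ) ∉ Γ := fun hc => hlight0 ⟨_, hc, hsub0⟩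
      have hdeg : degS H {v,w} < z := by
        by_contra hcc
        push_neg at hcc
        exact hnotΓ (Finset.mem_filter.2 ⟨hpair_pc, hcc⟩)
      calc (H.filter (fun e => ({v,w} : Finset ℕ) ⊆ e ∧ ¬ ∃ p ∈ Γ, p ⊆ e)).card
          ≤ degS H {v,w} := Finset.card_le_card (by
            intro e he
            rw [Finset.mem_filter] at he ⊢
            exact ⟨he.1, he.2.1⟩)
        _ ≤ z := le_of_lt hdeg
  have hlight : (H.filter (fun e => ¬ ∃ p ∈ Γ, p ⊆ e)).card ≤ n * ((ℓ*r) * z) := by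
    calc (H.filter (fun e => ¬ ∃ p ∈ Γ, p ⊆ e)).card
        ≤ ((Finset.range n).biUnion (fun v => (W v).biUnion (fun w =>
            H.filter (fun e => ({v,w} : Finset ℕ) ⊆ e ∧ ¬ ∃ p ∈ Γ, p ⊆ e)))).card := by
          apply Finset.card_le_card
          intro e he
          rw [Finset.mem_filter] at he
          have hne : e.Nonempty := by
            rw [← Finset.card_pos, hu e he.1]
            omega
          set v := e.min' hne with hv
          have hvmem : v ∈ e := Finset.min'_mem _ _
          obtain ⟨w, hw⟩ := hWcov v e he.1 hvmem
          rcases Finset.mem_inter.1 hw with ⟨hw1, hw2⟩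
          refine Finset.mem_biUnion.2 ⟨v, (edge_subset_hsupp he.1).trans hs hvmem,
            Finset.mem_biUnion.2 ⟨w, hw2, Finset.mem_filter.2 ⟨he.1, ?_, he.2⟩⟩⟩
          exact Finset.insert_subset hvmem
            (by rw [Finset.singleton_subset_iff]; exact Finset.mem_of_mem_erase hw1)
      _ ≤ ∑ v ∈ Finset.range n, ((W v).biUnion (fun w =>
            H.filter (fun e => ({v,w} : Finset ℕ) ⊆ e ∧ ¬ ∃ p ∈ Γ, p ⊆ e))).card :=
          Finset.card_biUnion_le
      _ ≤ ∑ v ∈ Finset.range n, (ℓ*r) * z := by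
          apply Finset.sum_le_sum
          intro v _
          calc ((W v).biUnion (fun w =>
              H.filter (fun e => ({v,w} : Finset ℕ) ⊆ e ∧ ¬ ∃ p ∈ Γ, p ⊆ e))).card
              ≤ ∑ w ∈ W v, (H.filter
                  (fun e => ({v,w} : Finset ℕ) ⊆ e ∧ ¬ ∃ p ∈ Γ, p ⊆ e)).card :=
                Finset.card_biUnion_le
            _ ≤ ∑ _w ∈ W v, z := Finset.sum_le_sum (fun w hw => hpairlight v w hw)
            _ = (W v).card * z := by rw [Finset.sum_const, smul_eq_mul]
            _ ≤ (ℓ*r) * z := Nat.mul_le_mul_right _ (hWD v)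
      _ = n * ((ℓ*r) * z) := by rw [Finset.sum_const, smul_eq_mul, Finset.card_range]
  have hheavy : (H.filter (fun e => ∃ p ∈ Γ, p ⊆ e)).card ≤ 2*((ℓ*r)*ℓ) * n ^ (r-2) := by
    calc (H.filter (fun e => ∃ p ∈ Γ, p ⊆ e)).card
        ≤ (Γ.biUnion (fun p => H.filter (fun e => p ⊆ e))).card := by
          apply Finset.card_le_card
          intro e he
          rw [Finset.mem_filter] at he
          obtain ⟨heH, p, hp, hpe⟩ := he
          exact Finset.mem_biUnion.2 ⟨p, hp, Finset.mem_filter.2 ⟨heH, hpe⟩⟩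
      _ ≤ ∑ p ∈ Γ, (H.filter (fun e => p ⊆ e)).card := Finset.card_biUnion_le
      _ = ∑ p ∈ Γ, degS H p := rfl
      _ ≤ 2*((ℓ*r)*ℓ) * n ^ (r-2) := hheavysum
  calc H.card = (H.filter (fun e => ∃ p ∈ Γ, p ⊆ e)).card
        + (H.filter (fun e => ¬ ∃ p ∈ Γ, p ⊆ e)).card := by
        rw [← Finset.card_filter_add_card_filter_not (p := fun e => ∃ p ∈ Γ, p ⊆ e)]
    _ ≤ 2*((ℓ*r)*ℓ) * n ^ (r-2) + n * ((ℓ*r) * z) := Nat.add_le_add hheavy hlight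
    _ = 2*((ℓ*r)*ℓ) * n ^ (r-2) + (ℓ*r)*(ℓ*r+1) * (n * n ^ (r-3)) := by rw [hz]; ring
    _ = 2*((ℓ*r)*ℓ) * n ^ (r-2) + (ℓ*r)*(ℓ*r+1) * n ^ (r-2) := by
        rw [pow_step (by omega : r - 3 + 1 = r - 2)]
    _ = ((ℓ*r)*(ℓ*r+1) + 2*((ℓ*r)*ℓ)) * n ^ (r-2) := by ring

theorem clique_compress {H : HG} {r n m ℓ : ℕ} (hr : 3 ≤ r) (hm : r ≤ m)
    (hu : Uniform r H) (hfree : ¬∃ x pet, SunAt H r x ℓ pet) :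
    (countSet H r n m ∅ ∅).card ≤ (r * 2^(r + ℓ*r)) * H.card := by
  classical
  have hWex : ∀ v : ℕ, ∃ W : Finset ℕ, W.card ≤ ℓ * (r-1) ∧ v ∉ W ∧
      ∀ e ∈ H, v ∈ e → ((e.erase v) ∩ W).Nonempty := fun v => exists_cover hu hr hfree v
  choose W hWcard hWv hWcov using hWex
  have hsub : countSet H r n m ∅ ∅ ⊆
      H.biUnion (fun e => e.biUnion (fun v => (e ∪ W v).powerset)) := by
    intro T hT
    rw [mem_countSet] at hT
    obtain ⟨⟨hTn, hTcard⟩, -, hcl, -⟩ := hT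
    have hne : T.Nonempty := Finset.card_pos.1 (by omega)
    set v := T.min' hne with hv
    have hvT : v ∈ T := Finset.min'_mem _ _
    set B := T \ (insert v (W v)) with hB
    have hBcard : B.card ≤ r - 2 := by
      by_contra hc
      push_neg at hc
      have hc' : r - 1 ≤ B.card := by omega
      obtain ⟨Q, hQB, hQcard⟩ := Finset.exists_subset_card_eq hc'
      have hvQ : v ∉ Q := by
        intro hvq
        have := hQB hvq
        rw [hB, Finset.mem_sdiff] at this
        exact this.2 (Finset.mem_insert_self _ _)
      have hQT : Q ⊆ T := hQB.trans (by rw [hB]; exact Finset.sdiff_subset)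
      have he : insert v Q ∈ T.powersetCard r := by
        rw [Finset.mem_powersetCard]
        refine ⟨Finset.insert_subset hvT hQT, ?_⟩
        rw [Finset.card_insert_of_notMem hvQ, hQcard]
        omega
      have heH : insert v Q ∈ H := hcl _ he
      obtain ⟨w, hw⟩ := hWcov v _ heH (Finset.mem_insert_self _ _)
      rcases Finset.mem_inter.1 hw with ⟨hw1, hw2⟩
      have hwQ : w ∈ Q := by
        have := Finset.mem_of_mem_erase hw1
        rcases Finset.mem_insert.1 this with rfl | h
        · exact absurd rfl (Finset.mem_erase.1 hw1).1
        · exact h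
      have := hQB hwQ
      rw [hB, Finset.mem_sdiff] at this
      exact this.2 (Finset.mem_insert_of_mem hw2)
    have hins_card : (insert v B).card ≤ r - 1 := by
      calc (insert v B).card ≤ B.card + 1 := Finset.card_insert_le _ _
        _ ≤ r - 1 := by omega
    obtain ⟨e, hBe, heT, hecard'⟩ := Finset.exists_subsuperset_card_eq
      (show insert v B ⊆ T from Finset.insert_subset hvT Finset.sdiff_subset)
      (show (insert v B).card ≤ r by omega) (show r ≤ T.card by omega)
    have heH : e ∈ H := hcl e (Finset.mem_powersetCard.2 ⟨heT, hecard'⟩)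
    have hve : v ∈ e := hBe (Finset.mem_insert_self _ _)
    refine Finset.mem_biUnion.2 ⟨e, heH, Finset.mem_biUnion.2 ⟨v, hve, ?_⟩⟩
    rw [Finset.mem_powerset]
    intro t ht
    by_cases htB : t ∈ B
    · exact Finset.mem_union_left _ (hBe (Finset.mem_insert_of_mem htB))
    · have : t ∈ insert v (W v) := by
        by_contra hc
        exact htB (by rw [hB, Finset.mem_sdiff]; exact ⟨ht, hc⟩)
      rcases Finset.mem_insert.1 this with rfl | h
      · exact Finset.mem_union_left _ hve
      · exact Finset.mem_union_right _ h
  calc (countSet H r n m ∅ ∅).card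
      ≤ (H.biUnion (fun e => e.biUnion (fun v => (e ∪ W v).powerset))).card :=
        Finset.card_le_card hsub
    _ ≤ ∑ e ∈ H, (e.biUnion (fun v => (e ∪ W v).powerset)).card := Finset.card_biUnion_le
    _ ≤ ∑ e ∈ H, (r * 2^(r + ℓ*r)) := by
        apply Finset.sum_le_sum
        intro e he
        calc (e.biUnion (fun v => (e ∪ W v).powerset)).card
            ≤ ∑ v ∈ e, ((e ∪ W v).powerset).card := Finset.card_biUnion_le
          _ ≤ ∑ _v ∈ e, 2^(r + ℓ*r) := by
              apply Finset.sum_le_sum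
              intro v _
              rw [Finset.card_powerset]
              apply Nat.pow_le_pow_right (by omega)
              calc (e ∪ W v).card ≤ e.card + (W v).card := Finset.card_union_le _ _
                _ ≤ r + ℓ*r := by
                    rw [hu e he]
                    have := (hWcard v).trans (Nat.mul_le_mul_left ℓ (show r - 1 ≤ r by omega))
                    omega
          _ = r * 2^(r + ℓ*r) := by rw [Finset.sum_const, smul_eq_mul, hu e he]
    _ = (r * 2^(r + ℓ*r)) * H.card := by rw [Finset.sum_const, smul_eq_mul, Nat.mul_comm]

/-- Case A bound: cliques avoiding `Z` in a graph whose `Z`-avoiding part is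
sunflower-free. -/
theorem caseA_bound {G : HG} {r n m ℓ : ℕ} {Z S₀ : Finset ℕ} (hr : 3 ≤ r) (hn : 1 ≤ n)
    (hl : 1 ≤ ℓ) (hm : r ≤ m) (hu : Uniform r G) (hs : hsupp G ⊆ Finset.range n)
    (hfree : ¬∃ x pet, SunAt (G.filter (fun e => e ∩ Z = ∅)) r x ℓ pet) :
    (countSet G r n m Z S₀).card
      ≤ ((r * 2^(r + ℓ*r)) * ((ℓ*r)*(ℓ*r+1) + 2*((ℓ*r)*ℓ))) * n ^ (r-2) := by
  classical
  set HZ := G.filter (fun e => e ∩ Z = ∅) with hHZ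
  have huZ : Uniform r HZ := fun e he => hu e (Finset.filter_subset _ _ he)
  have hsZ : hsupp HZ ⊆ Finset.range n := by
    intro a ha
    rcases mem_hsupp.1 ha with ⟨e, he, hae⟩
    exact hs (mem_hsupp.2 ⟨e, Finset.filter_subset _ _ he, hae⟩)
  have hsub : countSet G r n m Z S₀ ⊆ countSet HZ r n m ∅ ∅ := by
    intro R hR
    rw [mem_countSet] at hR ⊢
    obtain ⟨⟨h1, h2⟩, hZ0, hcl, -⟩ := hR
    refine ⟨⟨h1, h2⟩, by simp, ?_, by simp⟩
    intro e he
    refine Finset.mem_filter.2 ⟨hcl e he, ?_⟩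
    have heR : e ⊆ R := (Finset.mem_powersetCard.1 he).1
    rw [← Finset.subset_empty, ← hZ0]
    exact fun a ha => Finset.mem_inter.2 ⟨heR (Finset.mem_inter.1 ha).1, (Finset.mem_inter.1 ha).2⟩
  calc (countSet G r n m Z S₀).card ≤ (countSet HZ r n m ∅ ∅).card := Finset.card_le_card hsub
    _ ≤ (r * 2^(r + ℓ*r)) * HZ.card := clique_compress hr hm huZ hfree
    _ ≤ (r * 2^(r + ℓ*r)) * (((ℓ*r)*(ℓ*r+1) + 2*((ℓ*r)*ℓ)) * n ^ (r-2)) :=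
        Nat.mul_le_mul_left _ (edge_bound hr hn hl huZ hsZ hfree)
    _ = ((r * 2^(r + ℓ*r)) * ((ℓ*r)*(ℓ*r+1) + 2*((ℓ*r)*ℓ))) * n ^ (r-2) := by ring

lemma off_lt {l : ℕ → ℕ} {i j j' : ℕ} (hi : i < j) (hj' : j' < l i) :
    (∑ i' ∈ Finset.range i, l i') + j' < ∑ i' ∈ Finset.range j, l i' := by
  have h1 : (∑ i' ∈ Finset.range i, l i') + j' < ∑ i' ∈ Finset.range (i+1), l i' := by
    rw [Finset.sum_range_succ]
    omega
  have h2 : ∑ i' ∈ Finset.range (i+1), l i' ≤ ∑ i' ∈ Finset.range j, l i' := by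
    apply Finset.sum_le_sum_of_subset
    intro a ha
    rw [Finset.mem_range] at *
    omega
  omega

lemma off_inj {l : ℕ → ℕ} {i i' j1 j2 : ℕ} (hii : i < i') (hj1 : j1 < l i) :
    (∑ a ∈ Finset.range i, l a) + j1 < (∑ a ∈ Finset.range i', l a) + j2 := by
  have h1 : (∑ a ∈ Finset.range i, l a) + j1 < ∑ a ∈ Finset.range (i+1), l a := by
    rw [Finset.sum_range_succ]; omega
  have h2 : ∑ a ∈ Finset.range (i+1), l a ≤ ∑ a ∈ Finset.range i', l a := by
    apply Finset.sum_le_sum_of_subset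
    intro a ha
    rw [Finset.mem_range] at *
    omega
  omega

lemma forest_from_matching {r k j d : ℕ} {l : ℕ → ℕ} {G : HG} (hr : 3 ≤ r)
    (hjd : j + d = k) (hl0 : ∀ i < k, l i ≤ l 0) {Λ : ℕ} (hΛ : Λ = l 0 + k)
    {vI : ℕ → ℕ} {pI : ℕ → ℕ → Finset ℕ}
    (hisl : ∀ t < d, SunAt G r (vI t) Λ (pI t))
    (hicross : ∀ t < d, ∀ t' < d, t ≠ t' → ∀ a < Λ, ∀ b < Λ, pI t a ∩ pI t' b = ∅)
    {ZX : Finset ℕ} (hZX : ∀ t < d, ∀ a < Λ, pI t a ⊆ ZX)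
    {S' : Finset ℕ} (hS'card : k ≤ S'.card)
    {Qm : ℕ → Finset ℕ}
    (hQZ : ∀ a < ∑ i ∈ Finset.range j, l i, (Qm a) ∩ (ZX ∪ S') = ∅)
    (hQG : ∀ a < ∑ i ∈ Finset.range j, l i, ∀ x ∈ S', insert x (Qm a) ∈ G)
    (hQc : ∀ a < ∑ i ∈ Finset.range j, l i, (Qm a).card = r - 1)
    (hQdisj : ∀ a < ∑ i ∈ Finset.range j, l i, ∀ b < ∑ i ∈ Finset.range j, l i,
      a ≠ b → Qm a ∩ Qm b = ∅) :
    Forest G r k l := by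
  classical
  set L' := ∑ i ∈ Finset.range j, l i with hL'
  set S'' := S' \ ((Finset.range d).image vI) with hS''
  have hS''card : j ≤ S''.card := by
    have h1 : ((Finset.range d).image vI).card ≤ d :=
      Finset.card_image_le.trans (le_of_eq (Finset.card_range d))
    have h2 := Finset.le_card_sdiff ((Finset.range d).image vI) S'
    rw [← hS''] at h2
    omega
  obtain ⟨cp, hcpmem, hcpinj⟩ := exists_enum hS''card
  have hcpS' : ∀ i < j, cp i ∈ S' := by
    intro i hi
    exact (Finset.mem_sdiff.1 (hcpmem i hi)).1
  have hcpNotI : ∀ i < j, ∀ t < d, cp i ≠ vI t := by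
    intro i hi t ht hc
    exact (Finset.mem_sdiff.1 (hcpmem i hi)).2
      (Finset.mem_image.2 ⟨t, Finset.mem_range.2 ht, hc.symm⟩)
  -- good petal indices for islands
  set good : ℕ → Finset ℕ :=
    fun t => (Finset.range Λ).filter (fun a => ∀ i < j, cp i ∉ pI t a) with hgood
  have hgoodcard : ∀ t < d, Λ - j ≤ (good t).card := by
    intro t ht
    have hbad : ((Finset.range Λ).filter (fun a => ¬ ∀ i < j, cp i ∉ pI t a)).card ≤ j := by
      have hmap : ∀ a ∈ (Finset.range Λ).filter (fun a => ¬ ∀ i < j, cp i ∉ pI t a),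
          ∃ i < j, cp i ∈ pI t a := by
        intro a ha
        rw [Finset.mem_filter] at ha
        push_neg at ha
        obtain ⟨i, hi, hmem⟩ := ha.2
        exact ⟨i, hi, hmem⟩
      -- each cp i is in at most one petal
      calc ((Finset.range Λ).filter (fun a => ¬ ∀ i < j, cp i ∉ pI t a)).card
          ≤ ((Finset.range j).biUnion (fun i =>
              (Finset.range Λ).filter (fun a => cp i ∈ pI t a))).card := by
            apply Finset.card_le_card
            intro a ha
            obtain ⟨i, hi, hmem⟩ := hmap a ha
            rw [Finset.mem_filter] at ha
            exact Finset.mem_biUnion.2 ⟨i, Finset.mem_range.2 hi,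
              Finset.mem_filter.2 ⟨ha.1, hmem⟩⟩
        _ ≤ ∑ i ∈ Finset.range j, ((Finset.range Λ).filter (fun a => cp i ∈ pI t a)).card :=
            Finset.card_biUnion_le
        _ ≤ ∑ _i ∈ Finset.range j, 1 := by
            apply Finset.sum_le_sum
            intro i hi
            rw [Finset.card_le_one]
            intro a ha b hb
            rw [Finset.mem_filter, Finset.mem_range] at ha hb
            by_contra hab
            have := hisl t ht
            have hint := (this a ha.1).2.2.2 b hb.1 hab
            have : cp i ∈ pI t a ∩ pI t b := Finset.mem_inter.2 ⟨ha.2, hb.2⟩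
            rw [hint] at this
            exact hcpNotI i (Finset.mem_range.1 hi) t ht (Finset.mem_singleton.1 this)
        _ = j := by rw [Finset.sum_const, smul_eq_mul, Finset.card_range]; omega
    have htot := Finset.card_filter_add_card_filter_not
      (s := Finset.range Λ) (p := fun a => ∀ i < j, cp i ∉ pI t a)
    rw [Finset.card_range] at htot
    show Λ - j ≤ ((Finset.range Λ).filter (fun a => ∀ i < j, cp i ∉ pI t a)).card
    omega
  have hsel : ∀ t, ∃ selt : ℕ → ℕ, t < d →
      ((∀ b < l (j + t), selt b ∈ good t) ∧
       (∀ b < l (j + t), ∀ b' < l (j + t), b ≠ b' → selt b ≠ selt b')) := by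
    intro t
    by_cases ht : t < d
    · have h1 : l (j+t) ≤ l 0 := hl0 (j+t) (by omega)
      have h2 := hgoodcard t ht
      obtain ⟨g, hg1, hg2⟩ := exists_enum (s := good t) (m := l (j+t)) (by omega)
      exact ⟨g, fun _ => ⟨hg1, hg2⟩⟩
    · exact ⟨id, fun hc => absurd hc ht⟩
  choose sel hselP using hsel
  have hselmem : ∀ t < d, ∀ b < l (j + t), sel t b ∈ good t := fun t ht => (hselP t ht).1
  have hselinj : ∀ t < d, ∀ b < l (j + t), ∀ b' < l (j + t), b ≠ b' → sel t b ≠ sel t b' :=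
    fun t ht => (hselP t ht).2
  have hgoodΛ : ∀ t, ∀ a ∈ good t, a < Λ := by
    intro t a ha
    rw [hgood, Finset.mem_filter, Finset.mem_range] at ha
    exact ha.1
  have hgoodcp : ∀ t, ∀ a ∈ good t, ∀ i < j, cp i ∉ pI t a := by
    intro t a ha
    rw [hgood, Finset.mem_filter] at ha
    exact ha.2
  have hcpQ : ∀ i < j, ∀ a < L', cp i ∉ Qm a := by
    intro i hi a ha hc
    have : cp i ∈ Qm a ∩ (ZX ∪ S') :=
      Finset.mem_inter.2 ⟨hc, Finset.mem_union_right _ (hcpS' i hi)⟩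
    rw [hQZ a ha] at this
    exact Finset.notMem_empty _ this
  have hQZX : ∀ a < L', ∀ y ∈ Qm a, y ∉ ZX := by
    intro a ha y hy hc
    have : y ∈ Qm a ∩ (ZX ∪ S') :=
      Finset.mem_inter.2 ⟨hy, Finset.mem_union_left _ hc⟩
    rw [hQZ a ha] at this
    exact Finset.notMem_empty _ this
  refine ⟨fun i => if i < j then cp i else vI (i - j),
    fun i => if i < j then (fun b => insert (cp i) (Qm ((∑ a ∈ Finset.range i, l a) + b)))
      else (fun b => pI (i - j) (sel (i - j) b)), ?_, ?_⟩
  · -- each star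
    intro i hi
    by_cases hij : i < j
    · simp only [if_pos hij]
      intro b hb
      have hidx : (∑ a ∈ Finset.range i, l a) + b < L' := off_lt hij hb
      have hcpQ' : cp i ∉ Qm ((∑ a ∈ Finset.range i, l a) + b) := hcpQ i hij _ hidx
      refine ⟨hQG _ hidx _ (hcpS' i hij), Finset.mem_insert_self _ _, ?_, ?_⟩
      · rw [Finset.card_insert_of_notMem hcpQ', hQc _ hidx]
        omega
      · intro b' hb' hbb
        have hidx' : (∑ a ∈ Finset.range i, l a) + b' < L' := off_lt hij hb'
        ext y
        simp only [Finset.mem_inter, Finset.mem_insert, Finset.mem_singleton]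
        constructor
        · rintro ⟨(rfl | hy1), (h2 | hy2)⟩
          · rfl
          · rfl
          · exact h2
          · exfalso
            have : y ∈ Qm _ ∩ Qm _ := Finset.mem_inter.2 ⟨hy1, hy2⟩
            rw [hQdisj _ hidx _ hidx' (by omega)] at this
            exact Finset.notMem_empty _ this
        · rintro rfl
          exact ⟨Or.inl rfl, Or.inl rfl⟩
    · simp only [if_neg hij]
      have htd : i - j < d := by omega
      have hisun := hisl (i - j) htd
      have hieq : j + (i - j) = i := by omega
      intro b hb
      have hb' : b < l (j + (i - j)) := by rw [hieq]; exact hb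
      have hselb := hselmem _ htd b hb'
      have hselΛ := hgoodΛ _ _ hselb
      obtain ⟨hG1, hG2, hG3, hG4⟩ := hisun (sel (i-j) b) hselΛ
      refine ⟨hG1, hG2, hG3, ?_⟩
      intro b2 hb2 hbb
      have hb2' : b2 < l (j + (i - j)) := by rw [hieq]; exact hb2
      have hselb2 := hselmem _ htd b2 hb2'
      exact hG4 (sel (i-j) b2) (hgoodΛ _ _ hselb2)
        (hselinj _ htd b hb' b2 hb2' hbb)
  · -- cross-star disjointness
    intro i hi i' hi' hne b hb b' hb'
    rw [Finset.eq_empty_iff_forall_notMem]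
    intro y hy
    rcases Finset.mem_inter.1 hy with ⟨hy1, hy2⟩
    by_cases hij : i < j <;> by_cases hij' : i' < j
    · simp only [if_pos hij] at hy1
      simp only [if_pos hij'] at hy2
      have hidx : (∑ a ∈ Finset.range i, l a) + b < L' := off_lt hij hb
      have hidx' : (∑ a ∈ Finset.range i', l a) + b' < L' := off_lt hij' hb'
      have hdiffidx : (∑ a ∈ Finset.range i, l a) + b ≠ (∑ a ∈ Finset.range i', l a) + b' := by
        rcases Nat.lt_or_ge i i' with h | h
        · exact Nat.ne_of_lt (off_inj h hb)
        · have h2 : i' < i := by omega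
          exact (Nat.ne_of_lt (off_inj h2 hb')).symm
      rcases Finset.mem_insert.1 hy1 with rfl | hyQ
      · rcases Finset.mem_insert.1 hy2 with h | hyQ'
        · exact hcpinj i hij i' hij' hne h
        · exact hcpQ i hij _ hidx' hyQ'
      · rcases Finset.mem_insert.1 hy2 with rfl | hyQ'
        · exact hcpQ i' hij' _ hidx hyQ
        · have : y ∈ Qm _ ∩ Qm _ := Finset.mem_inter.2 ⟨hyQ, hyQ'⟩
          rw [hQdisj _ hidx _ hidx' hdiffidx] at this
          exact Finset.notMem_empty _ this
    · simp only [if_pos hij] at hy1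
      simp only [if_neg hij'] at hy2
      have htd' : i' - j < d := by omega
      have hieq' : j + (i' - j) = i' := by omega
      have hb2' : b' < l (j + (i' - j)) := by rw [hieq']; exact hb'
      have hselb' := hselmem _ htd' b' hb2'
      have hidx : (∑ a ∈ Finset.range i, l a) + b < L' := off_lt hij hb
      rcases Finset.mem_insert.1 hy1 with rfl | hyQ
      · exact hgoodcp _ _ hselb' i hij hy2
      · exact hQZX _ hidx y hyQ (hZX _ htd' _ (hgoodΛ _ _ hselb') hy2)
    · simp only [if_neg hij] at hy1
      simp only [if_pos hij'] at hy2
      have htd : i - j < d := by omega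
      have hieq : j + (i - j) = i := by omega
      have hb2 : b < l (j + (i - j)) := by rw [hieq]; exact hb
      have hselb := hselmem _ htd b hb2
      have hidx' : (∑ a ∈ Finset.range i', l a) + b' < L' := off_lt hij' hb'
      rcases Finset.mem_insert.1 hy2 with rfl | hyQ
      · exact hgoodcp _ _ hselb i' hij' hy1
      · exact hQZX _ hidx' y hyQ (hZX _ htd _ (hgoodΛ _ _ hselb) hy1)
    · simp only [if_neg hij] at hy1
      simp only [if_neg hij'] at hy2
      have htd : i - j < d := by omega
      have htd' : i' - j < d := by omega
      have hieq : j + (i - j) = i := by omega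
      have hieq' : j + (i' - j) = i' := by omega
      have hb2 : b < l (j + (i - j)) := by rw [hieq]; exact hb
      have hb2' : b' < l (j + (i' - j)) := by rw [hieq']; exact hb'
      have hselb := hselmem _ htd b hb2
      have hselb' := hselmem _ htd' b' hb2'
      have : y ∈ pI (i-j) (sel (i-j) b) ∩ pI (i'-j) (sel (i'-j) b') :=
        Finset.mem_inter.2 ⟨hy1, hy2⟩
      rw [hicross (i-j) htd (i'-j) htd' (by omega) _ (hgoodΛ _ _ hselb)
        _ (hgoodΛ _ _ hselb')] at this
      exact Finset.notMem_empty _ this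

noncomputable def Zset (Λ d : ℕ) (pI : ℕ → ℕ → Finset ℕ) : Finset ℕ :=
  (Finset.range d).biUnion (fun t => (Finset.range Λ).biUnion (pI t))

lemma subset_Zset {Λ d t a : ℕ} {pI : ℕ → ℕ → Finset ℕ} (ht : t < d) (ha : a < Λ) :
    pI t a ⊆ Zset Λ d pI := by
  intro y hy
  exact Finset.mem_biUnion.2 ⟨t, Finset.mem_range.2 ht,
    Finset.mem_biUnion.2 ⟨a, Finset.mem_range.2 ha, hy⟩⟩

lemma mem_Zset {Λ d y : ℕ} {pI : ℕ → ℕ → Finset ℕ} :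
    y ∈ Zset Λ d pI ↔ ∃ t < d, ∃ a < Λ, y ∈ pI t a := by
  simp [Zset, Finset.mem_biUnion, Finset.mem_range]

theorem main_count (r k : ℕ) (l : ℕ → ℕ) (hr : 3 ≤ r) (hk : 1 ≤ k)
    (hl2 : ∀ i < k, 2 ≤ l i) (hl0 : ∀ i < k, l i ≤ l 0) :
    ∀ j, j ≤ k → ∃ C : ℕ, ∀ n, 1 ≤ n → ∀ G : HG, Uniform r G →
      hsupp G ⊆ Finset.range n → ¬ Forest G r k l →
      ∀ vI : ℕ → ℕ, ∀ pI : ℕ → ℕ → Finset ℕ,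
        (∀ t < k - j, SunAt G r (vI t) (l 0 + k) (pI t)) →
        (∀ t < k - j, ∀ t' < k - j, t ≠ t' → ∀ a < l 0 + k, ∀ b < l 0 + k,
          pI t a ∩ pI t' b = ∅) →
        ∀ S₀ : Finset ℕ, S₀ ⊆ Zset (l 0 + k) (k - j) pI →
        ∀ m, r ≤ m → k + r - 1 ≤ m + S₀.card →
        (countSet G r n m (Zset (l 0 + k) (k - j) pI) S₀).card ≤ C * n ^ (r-2) := by
  set Λ := l 0 + k with hΛ
  intro j
  induction j with
  | zero =>
    intro _
    refine ⟨0, ?_⟩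
    intro n hn G hu hs hforest vI pI hisl hicross S₀ hS₀Z m hm hsize
    exfalso
    apply hforest
    refine ⟨vI, pI, ?_, ?_⟩
    · intro i hi
      have hik : i < k - 0 := by omega
      have hsun := hisl i hik
      intro b hb
      have hbΛ : b < Λ := by
        have := hl0 i hi
        omega
      obtain ⟨h1, h2, h3, h4⟩ := hsun b hbΛ
      refine ⟨h1, h2, h3, ?_⟩
      intro b' hb' hbb
      exact h4 b' (by have := hl0 i hi; omega) hbb
    · intro i hi i' hi' hne b hb b' hb'
      exact hicross i (by omega) i' (by omega) hne b (by have := hl0 i hi; omega)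
        b' (by have := hl0 i' hi'; omega)
  | succ j ih =>
    intro hjk
    obtain ⟨C0, hC0⟩ := ih (by omega)
    set L' := ∑ i ∈ Finset.range j, l i with hL'
    set CA := (r * 2^(r + Λ*r)) * ((Λ*r)*(Λ*r+1) + 2*((Λ*r)*Λ)) with hCA
    set Cmax := C0 + (∑ i ∈ Finset.range k, l i) * (r-1) + 1 with hCmax
    refine ⟨CA + 2^(Λ*r) * Cmax, ?_⟩
    intro n hn G hu hs hforest vI pI hisl hicross S₀ hS₀Z m hm hsize
    set d := k - (j+1) with hd
    set Z := Zset Λ d pI with hZ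
    have hΛ3 : 3 ≤ Λ := by
      have := hl2 0 (by omega)
      omega
    by_cases hcase : ∃ v pet, SunAt G r v Λ pet ∧ ∀ a < Λ, pet a ∩ Z = ∅
    · -- Case B : a sunflower avoiding Z exists
      obtain ⟨v0, pet0, hsun0, hpet0Z⟩ := hcase
      set X0 := (Finset.range Λ).biUnion pet0 with hX0
      have hX0card : X0.card ≤ Λ * r := by
        calc X0.card ≤ ∑ a ∈ Finset.range Λ, (pet0 a).card := Finset.card_biUnion_le
          _ ≤ ∑ _a ∈ Finset.range Λ, r := by
              apply Finset.sum_le_sum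
              intro a ha
              exact le_of_eq (hsun0 a (Finset.mem_range.1 ha)).2.2.1
          _ = Λ * r := by rw [Finset.sum_const, smul_eq_mul, Finset.card_range]
      have hX0Z : ∀ y ∈ X0, y ∉ Z := by
        intro y hy hyZ
        rcases Finset.mem_biUnion.1 hy with ⟨a, ha, hya⟩
        have : y ∈ pet0 a ∩ Z := Finset.mem_inter.2 ⟨hya, hyZ⟩
        rw [hpet0Z a (Finset.mem_range.1 ha)] at this
        exact Finset.notMem_empty _ this
      -- extended island system
      set vI' : ℕ → ℕ := fun t => if t = d then v0 else vI t with hvI'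
      set pI' : ℕ → ℕ → Finset ℕ := fun t => if t = d then pet0 else pI t with hpI'
      have hkd : k - j = d + 1 := by omega
      have hisl' : ∀ t < k - j, SunAt G r (vI' t) Λ (pI' t) := by
        intro t ht
        rw [hkd] at ht
        by_cases htd : t = d
        · subst htd
          simp only [hvI', hpI', if_pos rfl]
          exact hsun0
        · simp only [hvI', hpI', if_neg htd]
          exact hisl t (by omega)
      have hpI'sub : ∀ t < d + 1, ∀ a < Λ, pI' t a ⊆ Z ∪ X0 := by
        intro t ht a ha
        by_cases htd : t = d
        · subst htd
          simp only [hpI', if_pos rfl]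
          intro y hy
          exact Finset.mem_union_right _ (Finset.mem_biUnion.2 ⟨a, Finset.mem_range.2 ha, hy⟩)
        · simp only [hpI', if_neg htd]
          intro y hy
          exact Finset.mem_union_left _ (subset_Zset (by omega) ha hy)
      have hicross' : ∀ t < k - j, ∀ t' < k - j, t ≠ t' →
          ∀ a < Λ, ∀ b < Λ, pI' t a ∩ pI' t' b = ∅ := by
        intro t ht t' ht' hne a ha b hb
        rw [hkd] at ht ht'
        by_cases htd : t = d <;> by_cases htd' : t' = d
        · omega
        · subst htd
          simp only [hpI', if_pos rfl, if_neg htd']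
          rw [Finset.eq_empty_iff_forall_notMem]
          intro y hy
          rcases Finset.mem_inter.1 hy with ⟨h1, h2⟩
          exact hX0Z y (Finset.mem_biUnion.2 ⟨a, Finset.mem_range.2 ha, h1⟩)
            (subset_Zset (by omega) hb h2)
        · subst htd'
          simp only [hpI', if_pos rfl, if_neg htd]
          rw [Finset.eq_empty_iff_forall_notMem]
          intro y hy
          rcases Finset.mem_inter.1 hy with ⟨h1, h2⟩
          exact hX0Z y (Finset.mem_biUnion.2 ⟨b, Finset.mem_range.2 hb, h2⟩)
            (subset_Zset (by omega) ha h1)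
        · simp only [hpI', if_neg htd, if_neg htd']
          exact hicross t (by omega) t' (by omega) hne a ha b hb
      have hZ'eq : Zset Λ (k - j) pI' = Z ∪ X0 := by
        ext y
        rw [mem_Zset, Finset.mem_union]
        constructor
        · rintro ⟨t, ht, a, ha, hy⟩
          exact Finset.mem_union.1 (hpI'sub t (by omega) a ha hy)
        · rintro (hy | hy)
          · rcases mem_Zset.1 hy with ⟨t, ht, a, ha, hy2⟩
            refine ⟨t, by omega, a, ha, ?_⟩
            simp only [hpI', if_neg (by omega : ¬ t = d)]
            exact hy2
          · rcases Finset.mem_biUnion.1 hy with ⟨a, ha, hy2⟩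
            refine ⟨d, by omega, a, Finset.mem_range.1 ha, ?_⟩
            simp only [hpI', if_pos rfl]
            exact hy2
      -- partition according to S = R ∩ X0
      have hpart : (countSet G r n m Z S₀).card ≤
          ∑ S ∈ X0.powerset, ((countSet G r n m Z S₀).filter (fun R => R ∩ X0 = S)).card := by
        calc (countSet G r n m Z S₀).card
            ≤ (X0.powerset.biUnion (fun S =>
                (countSet G r n m Z S₀).filter (fun R => R ∩ X0 = S))).card := by
              apply Finset.card_le_card
              intro R hR
              exact Finset.mem_biUnion.2 ⟨R ∩ X0,
                Finset.mem_powerset.2 (Finset.inter_subset_right),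
                Finset.mem_filter.2 ⟨hR, rfl⟩⟩
          _ ≤ _ := Finset.card_biUnion_le
      have hper : ∀ S ∈ X0.powerset,
          ((countSet G r n m Z S₀).filter (fun R => R ∩ X0 = S)).card ≤ Cmax * n ^ (r-2) := by
        intro S hSmem
        rcases Finset.eq_empty_or_nonempty
            ((countSet G r n m Z S₀).filter (fun R => R ∩ X0 = S)) with hemp | ⟨R0, hR0⟩
        · rw [hemp, Finset.card_empty]
          exact Nat.zero_le _
        have hR0' := hR0
        rw [Finset.mem_filter, mem_countSet] at hR0'
        obtain ⟨⟨⟨hR0n, hR0card⟩, hR0Z, hR0cl, hR0join⟩, hR0S⟩ := hR0'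
        have hScard : S.card ≤ m := by
          rw [← hR0card, ← hR0S]
          exact Finset.card_le_card (Finset.inter_subset_left)
        set m' := m - S.card with hm'
        -- facts shared by all R in the fibre
        have hfacts : ∀ R ∈ (countSet G r n m Z S₀).filter (fun R => R ∩ X0 = S),
            (R \ X0) ⊆ Finset.range n ∧ (R \ X0).card = m' ∧ (R \ X0) ∩ Z = ∅ ∧
            (R \ X0) ∩ X0 = ∅ ∧ (R \ X0) ∩ S₀ = ∅ ∧ (R \ X0) ∩ S = ∅ ∧
            S ⊆ R ∧ R ∩ S₀ = ∅ := by
          intro R hR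
          rw [Finset.mem_filter, mem_countSet] at hR
          obtain ⟨⟨⟨hRn, hRcard⟩, hRZ, hRcl, hRjoin⟩, hRS⟩ := hR
          have hRS₀ : R ∩ S₀ = ∅ := by
            rw [Finset.eq_empty_iff_forall_notMem]
            intro y hy
            rcases Finset.mem_inter.1 hy with ⟨h1, h2⟩
            have : y ∈ R ∩ Z := Finset.mem_inter.2 ⟨h1, hS₀Z h2⟩
            rw [hRZ] at this
            exact Finset.notMem_empty _ this
          refine ⟨(Finset.sdiff_subset).trans hRn, ?_, ?_, ?_, ?_, ?_, ?_, hRS₀⟩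
          · have := Finset.card_sdiff_add_card_inter R X0
            rw [hRS, hRcard] at this
            omega
          · rw [Finset.eq_empty_iff_forall_notMem]
            intro y hy
            rcases Finset.mem_inter.1 hy with ⟨h1, h2⟩
            have : y ∈ R ∩ Z := Finset.mem_inter.2 ⟨(Finset.mem_sdiff.1 h1).1, h2⟩
            rw [hRZ] at this
            exact Finset.notMem_empty _ this
          · rw [Finset.eq_empty_iff_forall_notMem]
            intro y hy
            rcases Finset.mem_inter.1 hy with ⟨h1, h2⟩
            exact (Finset.mem_sdiff.1 h1).2 h2
          · rw [Finset.eq_empty_iff_forall_notMem]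
            intro y hy
            rcases Finset.mem_inter.1 hy with ⟨h1, h2⟩
            have : y ∈ R ∩ S₀ := Finset.mem_inter.2 ⟨(Finset.mem_sdiff.1 h1).1, h2⟩
            rw [hRS₀] at this
            exact Finset.notMem_empty _ this
          · rw [Finset.eq_empty_iff_forall_notMem]
            intro y hy
            rcases Finset.mem_inter.1 hy with ⟨h1, h2⟩
            exact (Finset.mem_sdiff.1 h1).2 (Finset.mem_powerset.1 hSmem h2)
          · rw [← hRS]
            exact Finset.inter_subset_left
        have hinj : Set.InjOn (fun R => R \ X0)
            ↑((countSet G r n m Z S₀).filter (fun R => R ∩ X0 = S)) := by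
          intro R hR R' hR' heq
          rw [Finset.mem_coe, Finset.mem_filter] at hR hR'
          dsimp only at heq
          have e1 : (R \ X0) ∪ (R ∩ X0) = R := Finset.sdiff_union_inter R X0
          have e2 : (R' \ X0) ∪ (R' ∩ X0) = R' := Finset.sdiff_union_inter R' X0
          rw [← e1, ← e2, heq, hR.2, hR'.2]
        have hSdisj : S ∩ S₀ = ∅ := by
          rw [Finset.eq_empty_iff_forall_notMem]
          intro y hy
          rcases Finset.mem_inter.1 hy with ⟨h1, h2⟩
          exact hX0Z y (Finset.mem_powerset.1 hSmem h1) (hS₀Z h2)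
        have hcardU : (S₀ ∪ S).card = S₀.card + S.card := by
          rw [Finset.card_union_of_disjoint]
          rw [Finset.disjoint_left]
          intro y hy hy2
          have : y ∈ S ∩ S₀ := Finset.mem_inter.2 ⟨hy2, hy⟩
          rw [hSdisj] at this
          exact Finset.notMem_empty _ this
        rcases Nat.lt_or_ge m' r with hm'r | hm'r
        · rcases Nat.lt_or_ge m' (r-1) with hm'r2 | hm'r2
          · -- tiny case : m' ≤ r - 2
            calc ((countSet G r n m Z S₀).filter (fun R => R ∩ X0 = S)).card
                ≤ ((Finset.range n).powersetCard m').card := by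
                  apply Finset.card_le_card_of_injOn (fun R => R \ X0)
                  · intro R hR
                    obtain ⟨h1, h2, -⟩ := hfacts R hR
                    exact Finset.mem_powersetCard.2 ⟨h1, h2⟩
                  · exact hinj
              _ ≤ n ^ m' := card_pc_le
              _ ≤ n ^ (r-2) := Nat.pow_le_pow_right hn (by omega)
              _ ≤ Cmax * n ^ (r-2) := le_mul_self_left (by rw [hCmax]; omega)
          · -- matching case : m' = r - 1
            have hm'eq : m' = r - 1 := by omega
            set QS : Finset (Finset ℕ) := ((Finset.range n).powersetCard (r-1)).filter
              (fun Q => Q ∩ ((Z ∪ X0) ∪ (S₀ ∪ S)) = ∅ ∧ ∀ x ∈ S₀ ∪ S, insert x Q ∈ G) with hQS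
            have hfib : ((countSet G r n m Z S₀).filter (fun R => R ∩ X0 = S)).card ≤ QS.card := by
              apply Finset.card_le_card_of_injOn (fun R => R \ X0)
              · intro R hR
                obtain ⟨h1, h2, h3, h4, h5, h6, hSR, hRS₀⟩ := hfacts R hR
                rw [Finset.mem_coe, Finset.mem_filter, mem_countSet] at hR
                obtain ⟨⟨⟨hRn, hRcard⟩, hRZ, hRcl, hRjoin⟩, hRS⟩ := hR
                rw [hQS, Finset.mem_coe, Finset.mem_filter]
                dsimp only
                refine ⟨Finset.mem_powersetCard.2 ⟨h1, by omega⟩, ?_, ?_⟩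
                · rw [Finset.eq_empty_iff_forall_notMem]
                  intro y hy
                  rcases Finset.mem_inter.1 hy with ⟨hy1, hy2⟩
                  rcases Finset.mem_union.1 hy2 with hy3 | hy3
                  · rcases Finset.mem_union.1 hy3 with hy4 | hy4
                    · exact Finset.notMem_empty y (h3 ▸ Finset.mem_inter.2 ⟨hy1, hy4⟩)
                    · exact Finset.notMem_empty y (h4 ▸ Finset.mem_inter.2 ⟨hy1, hy4⟩)
                  · rcases Finset.mem_union.1 hy3 with hy4 | hy4
                    · exact Finset.notMem_empty y (h5 ▸ Finset.mem_inter.2 ⟨hy1, hy4⟩)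
                    · exact Finset.notMem_empty y (h6 ▸ Finset.mem_inter.2 ⟨hy1, hy4⟩)
                · intro x hx
                  rcases Finset.mem_union.1 hx with hx1 | hx1
                  · exact hRjoin (R \ X0)
                      (Finset.mem_powersetCard.2 ⟨Finset.sdiff_subset, by omega⟩) x hx1
                  · apply hRcl
                    refine Finset.mem_powersetCard.2 ⟨?_, ?_⟩
                    · exact Finset.insert_subset (hSR hx1) Finset.sdiff_subset
                    · rw [Finset.card_insert_of_notMem
                        (fun hc => (Finset.mem_sdiff.1 hc).2 (Finset.mem_powerset.1 hSmem hx1)), h2]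
                      omega
              · exact hinj
            have hQcards : ∀ q ∈ QS, q.card ≤ r - 1 := by
              intro q hq
              rw [hQS, Finset.mem_filter, Finset.mem_powersetCard] at hq
              omega
            rcases matching_or_cover L' QS hQcards with ⟨g, hgmem, hgdisj⟩ | ⟨Wc, hWc, hWcov⟩
            · exfalso
              apply hforest
              have hisl2 : ∀ t < d + 1, SunAt G r (vI' t) Λ (pI' t) := by
                intro t ht
                exact hisl' t (by omega)
              have hicross2 : ∀ t < d + 1, ∀ t' < d + 1, t ≠ t' →
                  ∀ a < Λ, ∀ b < Λ, pI' t a ∩ pI' t' b = ∅ := by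
                intro t ht t' ht' hne a ha b hb
                exact hicross' t (by omega) t' (by omega) hne a ha b hb
              have hS'card : k ≤ (S₀ ∪ S).card := by
                rw [hcardU]
                omega
              refine forest_from_matching (Qm := g) (ZX := Z ∪ X0) (S' := S₀ ∪ S)
                hr (by omega : j + (d+1) = k) hl0 hΛ
                hisl2 hicross2 hpI'sub hS'card ?_ ?_ ?_ ?_
              · intro a ha
                have := hgmem a ha
                rw [hQS, Finset.mem_filter] at this
                exact this.2.1
              · intro a ha x hx
                have := hgmem a ha
                rw [hQS, Finset.mem_filter] at this
                exact this.2.2 x hx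
              · intro a ha
                have := hgmem a ha
                rw [hQS, Finset.mem_filter, Finset.mem_powersetCard] at this
                exact this.1.2
              · exact hgdisj
            · have hQsub : QS ⊆ (Finset.range n).powersetCard (r-1) := by
                rw [hQS]; exact Finset.filter_subset _ _
              have hcov := covered_card_le hQsub hWcov
              have hexp : r - 1 - 1 = r - 2 := by omega
              rw [hexp] at hcov
              calc ((countSet G r n m Z S₀).filter (fun R => R ∩ X0 = S)).card
                  ≤ QS.card := hfib
                _ ≤ Wc.card * n ^ (r-2) := hcov
                _ ≤ (L' * (r-1)) * n ^ (r-2) := Nat.mul_le_mul_right _ hWc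
                _ ≤ ((∑ i ∈ Finset.range k, l i) * (r-1)) * n ^ (r-2) := by
                    apply Nat.mul_le_mul_right
                    apply Nat.mul_le_mul_right
                    apply Finset.sum_le_sum_of_subset
                    intro a ha
                    rw [Finset.mem_range] at *
                    omega
                _ ≤ Cmax * n ^ (r-2) := by
                    apply Nat.mul_le_mul_right
                    rw [hCmax]
                    omega
        · -- recursive case : m' ≥ r
          have hsub' : S₀ ∪ S ⊆ Zset Λ (k - j) pI' := by
            rw [hZ'eq]
            intro y hy
            rcases Finset.mem_union.1 hy with hy1 | hy1
            · exact Finset.mem_union_left _ (hS₀Z hy1)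
            · exact Finset.mem_union_right _ (Finset.mem_powerset.1 hSmem hy1)
          have hsize' : k + r - 1 ≤ m' + (S₀ ∪ S).card := by
            rw [hcardU]
            omega
          calc ((countSet G r n m Z S₀).filter (fun R => R ∩ X0 = S)).card
              ≤ (countSet G r n m' (Zset Λ (k-j) pI') (S₀ ∪ S)).card := by
                apply Finset.card_le_card_of_injOn (fun R => R \ X0)
                · intro R hR
                  obtain ⟨h1, h2, h3, h4, h5, h6, hSR, hRS₀⟩ := hfacts R hR
                  rw [Finset.mem_coe, Finset.mem_filter, mem_countSet] at hR
                  obtain ⟨⟨⟨hRn, hRcard⟩, hRZ, hRcl, hRjoin⟩, hRS⟩ := hR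
                  rw [Finset.mem_coe, mem_countSet]
                  refine ⟨⟨h1, h2⟩, ?_, ?_, ?_⟩
                  · rw [hZ'eq, Finset.eq_empty_iff_forall_notMem]
                    intro y hy
                    rcases Finset.mem_inter.1 hy with ⟨hy1, hy2⟩
                    rcases Finset.mem_union.1 hy2 with hy3 | hy3
                    · exact Finset.notMem_empty y (h3 ▸ Finset.mem_inter.2 ⟨hy1, hy3⟩)
                    · exact Finset.notMem_empty y (h4 ▸ Finset.mem_inter.2 ⟨hy1, hy3⟩)
                  · intro e he
                    apply hRcl
                    have hee := Finset.mem_powersetCard.1 he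
                    exact Finset.mem_powersetCard.2 ⟨hee.1.trans Finset.sdiff_subset, hee.2⟩
                  · intro Q hQ x hx
                    have hQQ := Finset.mem_powersetCard.1 hQ
                    rcases Finset.mem_union.1 hx with hx1 | hx1
                    · exact hRjoin Q (Finset.mem_powersetCard.2
                        ⟨hQQ.1.trans Finset.sdiff_subset, hQQ.2⟩) x hx1
                    · apply hRcl
                      refine Finset.mem_powersetCard.2 ⟨?_, ?_⟩
                      · exact Finset.insert_subset (hSR hx1)
                          (hQQ.1.trans Finset.sdiff_subset)
                      · rw [Finset.card_insert_of_notMem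
                          (fun hc => (Finset.mem_sdiff.1 (hQQ.1 hc)).2
                            (Finset.mem_powerset.1 hSmem hx1)), hQQ.2]
                        omega
                · exact hinj
            _ ≤ C0 * n ^ (r-2) :=
                hC0 n hn G hu hs hforest vI' pI' hisl' hicross' (S₀ ∪ S) hsub' m' hm'r hsize'
            _ ≤ Cmax * n ^ (r-2) := by
                apply Nat.mul_le_mul_right
                rw [hCmax]
                omega
      calc (countSet G r n m Z S₀).card
          ≤ ∑ S ∈ X0.powerset, ((countSet G r n m Z S₀).filter (fun R => R ∩ X0 = S)).card :=
            hpart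
        _ ≤ ∑ _S ∈ X0.powerset, Cmax * n ^ (r-2) := Finset.sum_le_sum hper
        _ = 2^(X0.card) * (Cmax * n ^ (r-2)) := by
            rw [Finset.sum_const, smul_eq_mul, Finset.card_powerset]
        _ ≤ 2^(Λ*r) * (Cmax * n ^ (r-2)) := by
            apply Nat.mul_le_mul_right
            exact Nat.pow_le_pow_right (by omega) hX0card
        _ = (2^(Λ*r) * Cmax) * n ^ (r-2) := by ring
        _ ≤ (CA + 2^(Λ*r) * Cmax) * n ^ (r-2) := Nat.mul_le_mul_right _ (by omega)
    · -- Case A : no sunflower avoiding Z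
      have hfreeZ : ¬∃ x pet, SunAt (G.filter (fun e => e ∩ Z = ∅)) r x Λ pet := by
        rintro ⟨x, pet, hsun⟩
        apply hcase
        refine ⟨x, pet, ?_, ?_⟩
        · intro a ha
          obtain ⟨h1, h2, h3, h4⟩ := hsun a ha
          exact ⟨Finset.filter_subset _ _ h1, h2, h3, h4⟩
        · intro a ha
          exact (Finset.mem_filter.1 (hsun a ha).1).2
      calc (countSet G r n m Z S₀).card
          ≤ CA * n ^ (r-2) := caseA_bound hr hn (by omega) hm hu hs hfreeZ
        _ ≤ (CA + 2^(Λ*r) * Cmax) * n ^ (r-2) := Nat.mul_le_mul_right _ (by omega)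

lemma empty_not_contains {r k : ℕ} {l : ℕ → ℕ} (hk : 1 ≤ k) (hl : 1 ≤ l 0) :
    ¬ Contains ∅ (hIUnion k (fun i => expansion r (starG (l i)))) := by
  rintro ⟨K, hK, f, hinj, hemap⟩
  have hKempty : K = ∅ := Finset.subset_empty.1 hK
  have : (EF r 0 0).image f ∈ emap f (hIUnion k (fun i => expansion r (starG (l i)))) :=
    Finset.mem_image.2 ⟨EF r 0 0, EF_mem_forest hk hl, rfl⟩
  rw [hemap, hKempty] at this
  exact Finset.notMem_empty _ this

lemma exCount_set_nonempty {r n s k : ℕ} {l : ℕ → ℕ} (hk : 1 ≤ k) (hl : 1 ≤ l 0) :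
    { m | ∃ G : HG, Uniform r G ∧ hsupp G ⊆ Finset.range n ∧
      ¬ Contains G (hIUnion k (fun i => expansion r (starG (l i)))) ∧
      m = copyCount (completeHG r s) G }.Nonempty := by
  refine ⟨copyCount (completeHG r s) ∅, ∅, ?_, ?_, empty_not_contains hk hl, rfl⟩
  · intro e he
    exact absurd he (Finset.notMem_empty _)
  · intro a ha
    simp [hsupp] at ha

lemma copyCount_bdd {r n : ℕ} {H G : HG} (hu : Uniform r G) (hs : hsupp G ⊆ Finset.range n) :
    copyCount H G ≤ 2 ^ ((Finset.range n).powersetCard r).card := by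
  have h1 : {K : HG | K ⊆ G ∧ IsCopy H K} ⊆ ↑G.powerset := by
    intro K hK
    exact Finset.mem_coe.2 (Finset.mem_powerset.2 hK.1)
  calc copyCount H G ≤ (↑G.powerset : Set HG).ncard := by
        apply Set.ncard_le_ncard h1
    _ = G.powerset.card := Set.ncard_coe_finset _
    _ = 2 ^ G.card := Finset.card_powerset _
    _ ≤ 2 ^ ((Finset.range n).powersetCard r).card := by
        apply Nat.pow_le_pow_right (by omega)
        exact Finset.card_le_card (fun e he => edge_mem_pc hu hs he)

lemma exCount_set_bdd (r n s : ℕ) (F : HG) :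
    BddAbove { m | ∃ G : HG, Uniform r G ∧ hsupp G ⊆ Finset.range n ∧
      ¬ Contains G F ∧ m = copyCount (completeHG r s) G } := by
  refine ⟨2 ^ ((Finset.range n).powersetCard r).card, ?_⟩
  rintro m ⟨G, hu, hs, -, rfl⟩
  exact copyCount_bdd hu hs

theorem upper_nat (r s k : ℕ) (l : ℕ → ℕ) (hr : 3 ≤ r) (hk : 1 ≤ k)
    (hdec : ∀ i, i + 1 < k → l (i + 1) ≤ l i) (hl : ∀ i < k, 2 ≤ l i)
    (hsk : k + r - 1 ≤ s) :
    ∃ C : ℕ, ∀ n, 1 ≤ n →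
      exCount r n (completeHG r s) (hIUnion k (fun i => expansion r (starG (l i))))
        ≤ C * n ^ (r-2) := by
  have hl0 : ∀ i < k, l i ≤ l 0 := by
    intro i
    induction i with
    | zero => exact fun _ => le_refl _
    | succ i ihi => exact fun h => le_trans (hdec i h) (ihi (by omega))
  obtain ⟨C, hC⟩ := main_count r k l hr hk hl hl0 k (le_refl k)
  refine ⟨C, ?_⟩
  intro n hn
  apply csSup_le (exCount_set_nonempty hk (by have := hl 0 hk; omega))
  rintro m ⟨G, hu, hs, hcont, rfl⟩
  have hforest : ¬ Forest G r k l := fun hF => hcont (build hr hF)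
  have hrs : r ≤ s := by omega
  rw [copyCount_eq_cliques (by omega) hrs hu hs]
  have hmain := hC n hn G hu hs hforest (fun _ => 0) (fun _ _ => ∅)
    (fun t ht => absurd ht (by omega)) (fun t ht => absurd ht (by omega))
    ∅ (by simp) s hrs (by omega)
  have hZ0 : Zset (l 0 + k) (k - k) (fun _ _ => (∅ : Finset ℕ)) = ∅ := by
    simp [Zset]
  rwa [hZ0] at hmain

noncomputable def GA (r n a : ℕ) : HG :=
  ((Finset.range n).powersetCard r).filter (fun e => 2 ≤ (e ∩ Finset.range a).card)

lemma GA_uniform {r n a : ℕ} : Uniform r (GA r n a) := by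
  intro e he
  rw [GA, Finset.mem_filter, Finset.mem_powersetCard] at he
  exact he.1.2

lemma GA_supp {r n a : ℕ} : hsupp (GA r n a) ⊆ Finset.range n := by
  intro y hy
  rcases mem_hsupp.1 hy with ⟨e, he, hye⟩
  rw [GA, Finset.mem_filter, Finset.mem_powersetCard] at he
  exact he.1.1 hye

lemma GA_forest_free {r n a k : ℕ} {l : ℕ → ℕ} (hl1 : ∀ i < k, 1 ≤ l i)
    (ha : a + 1 ≤ (∑ i ∈ Finset.range k, l i) + k) : ¬ Forest (GA r n a) r k l := by
  rintro ⟨x, pet, hsun, hcross⟩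
  set U : ℕ → Finset ℕ := fun i => ((Finset.range (l i)).biUnion (pet i)) ∩ Finset.range a
    with hU
  have hpet2 : ∀ i < k, ∀ jj < l i, 2 ≤ (pet i jj ∩ Finset.range a).card := by
    intro i hi jj hjj
    have := (hsun i hi jj hjj).1
    rw [GA, Finset.mem_filter] at this
    exact this.2
  have hUcard : ∀ i < k, l i + 1 ≤ (U i).card := by
    intro i hi
    by_cases hx : x i ∈ Finset.range a
    · set V : ℕ → Finset ℕ := fun jj => (pet i jj ∩ Finset.range a).erase (x i) with hV
      have hVU : insert (x i) ((Finset.range (l i)).biUnion V) ⊆ U i := by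
        apply Finset.insert_subset
        · exact Finset.mem_inter.2 ⟨Finset.mem_biUnion.2 ⟨0, Finset.mem_range.2 (hl1 i hi),
            (hsun i hi 0 (hl1 i hi)).2.1⟩, hx⟩
        · intro y hy
          rcases Finset.mem_biUnion.1 hy with ⟨jj, hjj, hyV⟩
          have := Finset.mem_of_mem_erase hyV
          rcases Finset.mem_inter.1 this with ⟨h1, h2⟩
          exact Finset.mem_inter.2 ⟨Finset.mem_biUnion.2 ⟨jj, hjj, h1⟩, h2⟩
      have hxV : x i ∉ (Finset.range (l i)).biUnion V := by
        intro hc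
        rcases Finset.mem_biUnion.1 hc with ⟨jj, hjj, hyV⟩
        exact (Finset.mem_erase.1 hyV).1 rfl
      have hVdisj : ∀ jj ∈ Finset.range (l i), ∀ jj' ∈ Finset.range (l i), jj ≠ jj' →
          Disjoint (V jj) (V jj') := by
        intro jj hjj jj' hjj' hne
        rw [Finset.disjoint_left]
        intro y hy hy'
        have h1 := Finset.mem_of_mem_erase hy
        have h2 := Finset.mem_of_mem_erase hy'
        have : y ∈ pet i jj ∩ pet i jj' := Finset.mem_inter.2
          ⟨(Finset.mem_inter.1 h1).1, (Finset.mem_inter.1 h2).1⟩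
        rw [(hsun i hi jj (Finset.mem_range.1 hjj)).2.2.2 jj' (Finset.mem_range.1 hjj') hne]
          at this
        exact (Finset.mem_erase.1 hy).1 (Finset.mem_singleton.1 this)
      calc l i + 1 = 1 + ∑ jj ∈ Finset.range (l i), 1 := by
            rw [Finset.sum_const, smul_eq_mul, Finset.card_range]; omega
        _ ≤ 1 + ∑ jj ∈ Finset.range (l i), (V jj).card := by
            apply Nat.add_le_add_left
            apply Finset.sum_le_sum
            intro jj hjj
            have := hpet2 i hi jj (Finset.mem_range.1 hjj)
            show 1 ≤ ((pet i jj ∩ Finset.range a).erase (x i)).card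
            have hce := Finset.card_erase_of_mem (s := pet i jj ∩ Finset.range a) (a := x i)
            by_cases hxm : x i ∈ pet i jj ∩ Finset.range a
            · rw [hce hxm]
              have := hpet2 i hi jj (Finset.mem_range.1 hjj)
              omega
            · rw [Finset.erase_eq_of_notMem hxm]
              have := hpet2 i hi jj (Finset.mem_range.1 hjj)
              omega
        _ = 1 + ((Finset.range (l i)).biUnion V).card := by
            rw [Finset.card_biUnion hVdisj]
        _ = (insert (x i) ((Finset.range (l i)).biUnion V)).card := by
            rw [Finset.card_insert_of_notMem hxV]
            omega
        _ ≤ (U i).card := Finset.card_le_card hVU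
    · set V : ℕ → Finset ℕ := fun jj => pet i jj ∩ Finset.range a with hV
      have hVU : (Finset.range (l i)).biUnion V ⊆ U i := by
        intro y hy
        rcases Finset.mem_biUnion.1 hy with ⟨jj, hjj, hyV⟩
        rcases Finset.mem_inter.1 hyV with ⟨h1, h2⟩
        exact Finset.mem_inter.2 ⟨Finset.mem_biUnion.2 ⟨jj, hjj, h1⟩, h2⟩
      have hVdisj : ∀ jj ∈ Finset.range (l i), ∀ jj' ∈ Finset.range (l i), jj ≠ jj' →
          Disjoint (V jj) (V jj') := by
        intro jj hjj jj' hjj' hne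
        rw [Finset.disjoint_left]
        intro y hy hy'
        have : y ∈ pet i jj ∩ pet i jj' := Finset.mem_inter.2
          ⟨(Finset.mem_inter.1 hy).1, (Finset.mem_inter.1 hy').1⟩
        rw [(hsun i hi jj (Finset.mem_range.1 hjj)).2.2.2 jj' (Finset.mem_range.1 hjj') hne]
          at this
        have := Finset.mem_singleton.1 this
        subst this
        exact hx (Finset.mem_inter.1 hy).2
      calc l i + 1 ≤ ∑ jj ∈ Finset.range (l i), 2 := by
            rw [Finset.sum_const, smul_eq_mul, Finset.card_range]
            have := hl1 i hi
            omega
        _ ≤ ∑ jj ∈ Finset.range (l i), (V jj).card :=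
            Finset.sum_le_sum (fun jj hjj => hpet2 i hi jj (Finset.mem_range.1 hjj))
        _ = ((Finset.range (l i)).biUnion V).card := (Finset.card_biUnion hVdisj).symm
        _ ≤ (U i).card := Finset.card_le_card hVU
  have hUdisj : ∀ i ∈ Finset.range k, ∀ i' ∈ Finset.range k, i ≠ i' →
      Disjoint (U i) (U i') := by
    intro i hi i' hi' hne
    rw [Finset.disjoint_left]
    intro y hy hy'
    rcases Finset.mem_biUnion.1 (Finset.mem_inter.1 hy).1 with ⟨jj, hjj, h1⟩
    rcases Finset.mem_biUnion.1 (Finset.mem_inter.1 hy').1 with ⟨jj', hjj', h2⟩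
    have : y ∈ pet i jj ∩ pet i' jj' := Finset.mem_inter.2 ⟨h1, h2⟩
    rw [hcross i (Finset.mem_range.1 hi) i' (Finset.mem_range.1 hi') hne jj
      (Finset.mem_range.1 hjj) jj' (Finset.mem_range.1 hjj')] at this
    exact Finset.notMem_empty _ this
  have hsum : (∑ i ∈ Finset.range k, l i) + k ≤ a := by
    calc (∑ i ∈ Finset.range k, l i) + k = ∑ i ∈ Finset.range k, (l i + 1) := by
          rw [Finset.sum_add_distrib, Finset.sum_const, smul_eq_mul, Finset.card_range]
          omega
      _ ≤ ∑ i ∈ Finset.range k, (U i).card :=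
          Finset.sum_le_sum (fun i hi => hUcard i (Finset.mem_range.1 hi))
      _ = ((Finset.range k).biUnion U).card := (Finset.card_biUnion hUdisj).symm
      _ ≤ (Finset.range a).card := Finset.card_le_card (by
          intro y hy
          rcases Finset.mem_biUnion.1 hy with ⟨i, hi, hyU⟩
          exact (Finset.mem_inter.1 hyU).2)
      _ = a := Finset.card_range a
  omega

lemma GA_cliques {r n s a : ℕ} (hr : 3 ≤ r) (han : a ≤ n) (hs : s = a + (r-2)) :
    Nat.choose (n - a) (r-2) ≤ (countSet (GA r n a) r n s ∅ ∅).card := by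
  have hkey : ((Finset.Ico a n).powersetCard (r-2)).card
      ≤ (countSet (GA r n a) r n s ∅ ∅).card := by
    apply Finset.card_le_card_of_injOn (fun B => Finset.range a ∪ B)
    · intro B hB
      rw [Finset.mem_coe, Finset.mem_powersetCard] at hB
      obtain ⟨hBsub, hBcard⟩ := hB
      have hBdisj : ∀ y ∈ B, y ∉ Finset.range a := by
        intro y hy hc
        have := hBsub hy
        rw [Finset.mem_Ico] at this
        rw [Finset.mem_range] at hc
        omega
      rw [Finset.mem_coe, mem_countSet]
      refine ⟨⟨?_, ?_⟩, by simp, ?_, by simp⟩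
      · apply Finset.union_subset
        · intro y hy
          rw [Finset.mem_range] at *
          omega
        · intro y hy
          have := hBsub hy
          rw [Finset.mem_Ico] at this
          rw [Finset.mem_range]
          omega
      · rw [Finset.card_union_of_disjoint (Finset.disjoint_left.2
          (fun y hy hc => hBdisj y hc hy)), Finset.card_range, hBcard, hs]
      · intro e he
        rw [Finset.mem_powersetCard] at he
        obtain ⟨hesub, hecard⟩ := he
        rw [GA, Finset.mem_filter, Finset.mem_powersetCard]
        have heB : e \ Finset.range a ⊆ B := by
          intro y hy
          rcases Finset.mem_sdiff.1 hy with ⟨h1, h2⟩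
          rcases Finset.mem_union.1 (hesub h1) with h3 | h3
          · exact absurd h3 h2
          · exact h3
        have hcc := Finset.card_inter_add_card_sdiff e (Finset.range a)
        have hcB : (e \ Finset.range a).card ≤ r - 2 := by
          rw [← hBcard]
          exact Finset.card_le_card heB
        refine ⟨⟨?_, hecard⟩, by omega⟩
        intro y hy
        rcases Finset.mem_union.1 (hesub hy) with h3 | h3
        · rw [Finset.mem_range] at *
          omega
        · have := hBsub h3
          rw [Finset.mem_Ico] at this
          rw [Finset.mem_range]
          omega
    · intro B hB B' hB' heq
      rw [Finset.mem_coe, Finset.mem_powersetCard] at hB hB'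
      dsimp only at heq
      have h1 : ∀ (B0 : Finset ℕ), B0 ⊆ Finset.Ico a n →
          (Finset.range a ∪ B0) \ Finset.range a = B0 := by
        intro B0 hB0
        rw [Finset.union_sdiff_left]
        rw [Finset.sdiff_eq_self_iff_disjoint, Finset.disjoint_left]
        intro y hy hc
        have := hB0 hy
        rw [Finset.mem_Ico] at this
        rw [Finset.mem_range] at hc
        omega
      rw [← h1 B hB.1, ← h1 B' hB'.1, heq]
  calc Nat.choose (n-a) (r-2) = ((Finset.Ico a n).powersetCard (r-2)).card := by
        rw [Finset.card_powersetCard, Nat.card_Ico]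
    _ ≤ _ := hkey

theorem lower_nat (r s k : ℕ) (l : ℕ → ℕ) (hr : 3 ≤ r) (hk : 1 ≤ k)
    (hl : ∀ i < k, 2 ≤ l i) (hsk : k + r - 1 ≤ s)
    (hs2 : s ≤ (∑ i ∈ Finset.range k, (l i + 1)) + r - 3) :
    ∀ n, s - r + 2 ≤ n →
      Nat.choose (n - (s - r + 2)) (r-2)
        ≤ exCount r n (completeHG r s) (hIUnion k (fun i => expansion r (starG (l i)))) := by
  intro n hn
  set a := s - r + 2 with ha
  have hsum_eq : ∑ i ∈ Finset.range k, (l i + 1) = (∑ i ∈ Finset.range k, l i) + k := by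
    rw [Finset.sum_add_distrib, Finset.sum_const, smul_eq_mul, Finset.card_range]
    omega
  have hacond : a + 1 ≤ (∑ i ∈ Finset.range k, l i) + k := by
    rw [← hsum_eq]
    omega
  have hfree : ¬ Contains (GA r n a) (hIUnion k (fun i => expansion r (starG (l i)))) := by
    intro hcont
    exact GA_forest_free (fun i hi => by have := hl i hi; omega) hacond (decompose hr hcont)
  have hcopy : copyCount (completeHG r s) (GA r n a) = (countSet (GA r n a) r n s ∅ ∅).card :=
    copyCount_eq_cliques (by omega) (by omega) GA_uniform GA_supp
  have hGA := GA_cliques (r := r) (n := n) (s := s) (a := a) hr hn (by omega)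
  calc Nat.choose (n - a) (r-2) ≤ (countSet (GA r n a) r n s ∅ ∅).card := hGA
    _ = copyCount (completeHG r s) (GA r n a) := hcopy.symm
    _ ≤ _ := le_csSup (exCount_set_bdd r n s _) ⟨GA r n a, GA_uniform, GA_supp, hfree, rfl⟩


/-- For expansions of star forests with `s ≥ k + r - 1`:
`ex_r(n, K_s^{(r)}, S^r_{l 0} ∪ ⋯ ∪ S^r_{l (k-1)}) = O(n^{r-2})`, and if moreover
`s ≤ Σ(l i + 1) + r - 3` then it is also `Ω(n^{r-2})`. -/
theorem stmt7 (r s k : ℕ) (l : ℕ → ℕ) (hr : 3 ≤ r) (hk : 1 ≤ k)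
    (hdec : ∀ i, i + 1 < k → l (i + 1) ≤ l i) (hl : ∀ i < k, 2 ≤ l i)
    (hsk : k + r - 1 ≤ s) :
    (∃ c : ℝ, ∃ N : ℕ, ∀ n : ℕ, N ≤ n →
      (exCount r n (completeHG r s) (hIUnion k (fun i => expansion r (starG (l i)))) : ℝ) ≤
        c * (n : ℝ) ^ (r - 2)) ∧
    (s ≤ (∑ i ∈ Finset.range k, (l i + 1)) + r - 3 →
      ∃ c' : ℝ, 0 < c' ∧ ∃ N : ℕ, ∀ n : ℕ, N ≤ n →
        c' * (n : ℝ) ^ (r - 2) ≤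
          (exCount r n (completeHG r s)
            (hIUnion k (fun i => expansion r (starG (l i)))) : ℝ)) := by
  constructor
  · obtain ⟨C, hC⟩ := upper_nat r s k l hr hk hdec hl hsk
    refine ⟨(C : ℝ), 1, ?_⟩
    intro n hn
    calc (exCount r n (completeHG r s) (hIUnion k (fun i => expansion r (starG (l i)))) : ℝ)
        ≤ ((C * n ^ (r-2) : ℕ) : ℝ) := Nat.cast_le.2 (hC n hn)
      _ = (C : ℝ) * (n : ℝ) ^ (r-2) := by push_cast; ring
  · intro hs2
    set a := s - r + 2 with ha
    refine ⟨((2:ℝ)^(r-2) * ((r-2).factorial : ℝ))⁻¹, ?_, 2*(a+r), ?_⟩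
    · apply inv_pos.2
      apply mul_pos
      · positivity
      · exact_mod_cast Nat.factorial_pos (r-2)
    · intro n hn
      have h1 : n ^ (r-2) ≤ 2^(r-2) * ((r-2).factorial * Nat.choose (n-a) (r-2)) := by
        calc n^(r-2) ≤ (2 * ((n-a) + 1 - (r-2)))^(r-2) :=
              Nat.pow_le_pow_left (by omega) _
          _ = 2^(r-2) * ((n-a) + 1 - (r-2))^(r-2) := Nat.mul_pow 2 _ (r-2)
          _ ≤ 2^(r-2) * ((n-a).descFactorial (r-2)) :=
              Nat.mul_le_mul_left _ (Nat.pow_sub_le_descFactorial (n-a) (r-2))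
          _ = 2^(r-2) * ((r-2).factorial * Nat.choose (n-a) (r-2)) := by
              rw [Nat.descFactorial_eq_factorial_mul_choose]
      have h2 := lower_nat r s k l hr hk hl hsk hs2 n (by omega)
      have hcast : (n:ℝ)^(r-2)
          ≤ 2^(r-2) * ((r-2).factorial : ℝ) * (Nat.choose (n-a) (r-2) : ℝ) := by
        calc (n:ℝ)^(r-2) = ((n^(r-2) : ℕ) : ℝ) := by push_cast; ring
          _ ≤ ((2^(r-2) * ((r-2).factorial * Nat.choose (n-a) (r-2)) : ℕ) : ℝ) :=
              Nat.cast_le.2 h1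
          _ = _ := by push_cast; ring
      have h3 : (Nat.choose (n-a) (r-2) : ℝ)
          ≤ (exCount r n (completeHG r s)
              (hIUnion k (fun i => expansion r (starG (l i)))) : ℝ) := Nat.cast_le.2 h2
      have hpos : (0:ℝ) < 2^(r-2) * ((r-2).factorial : ℝ) := by
        apply mul_pos
        · positivity
        · exact_mod_cast Nat.factorial_pos (r-2)
      calc ((2:ℝ)^(r-2) * ((r-2).factorial : ℝ))⁻¹ * (n:ℝ)^(r-2)
          ≤ ((2:ℝ)^(r-2) * ((r-2).factorial : ℝ))⁻¹
            * (2^(r-2) * ((r-2).factorial : ℝ) * (Nat.choose (n-a) (r-2) : ℝ)) := by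
            apply mul_le_mul_of_nonneg_left hcast
            exact inv_nonneg.2 (le_of_lt hpos)
        _ = (Nat.choose (n-a) (r-2) : ℝ) := by
            field_simp
        _ ≤ _ := h3
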